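/- arXiv:2005.10743 — 4 statements merged into one kernel-verified Lean document; each statement's English description precedes it below -/
import Mathlib

section
/- Let $Y$ be the number of fixed points of a uniformly random permutation of $[n]$. Then for any $t \geq 0$, $\mathbb{E}[e^{tY}] \leq \exp(e^t - 1)$, i.e., the moment generating function of $Y$ is dominated by that of a Poisson(1) random variable. -/
open Finset in
lemma card_fixing_aux (n : ℕ) (s : Finset (Fin n)) :
    (Finset.univ.filter fun σ : Equiv.Perm (Fin n) => ∀ i ∈ s, σ i = i).card
      = (n - s.card).factorial := by
  classical
  rw [← Fintype.card_subtype]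
  have e1 : {σ : Equiv.Perm (Fin n) // ∀ i ∈ s, σ i = i}
      ≃ Equiv.Perm {x : Fin n // x ∉ s} := by
    refine (Equiv.subtypeEquivRight ?_).trans
      (Equiv.Perm.subtypeEquivSubtypePerm (fun x => x ∉ s)).symm
    intro f
    constructor
    · intro h a ha; exact h a (not_not.mp ha)
    · intro h i hi; exact h i (not_not.mpr hi)
  rw [Fintype.card_congr e1, Fintype.card_perm]
  congr 1
  rw [Fintype.card_subtype]
  simp [Finset.filter_not, Finset.card_sdiff_of_subset (Finset.subset_univ s)]

open Finset in
/-- The moment generating function of the number of fixed points `Y` of a uniformly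
random permutation of `[n]` is dominated by that of a `Poisson(1)` random variable:
`E[e^{tY}] ≤ exp(e^t - 1)` for all `t ≥ 0`. -/
theorem stmt_3 (n : ℕ) (t : ℝ) (ht : 0 ≤ t) :
    ((Fintype.card (Equiv.Perm (Fin n)) : ℝ))⁻¹ *
        ∑ σ : Equiv.Perm (Fin n),
          Real.exp (t * ((Finset.univ.filter fun i => σ i = i).card : ℝ)) ≤
      Real.exp (Real.exp t - 1) := by
  classical
  set x := Real.exp t - 1 with hxdef
  have hx0 : 0 ≤ x := by
    have := Real.one_le_exp ht
    simp only [hxdef]; linarith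
  have key : ∀ σ : Equiv.Perm (Fin n),
      Real.exp (t * ((Finset.univ.filter fun i => σ i = i).card : ℝ))
        = ∑ s ∈ (Finset.univ.filter fun i => σ i = i).powerset, x ^ s.card := by
    intro σ
    rw [mul_comm, Real.exp_nat_mul]
    have hxe : Real.exp t = x + 1 := by simp [hxdef]
    rw [hxe, ← Finset.prod_const (b := x + 1),
      Finset.prod_add (fun _ => x) (fun _ => (1 : ℝ))]
    simp [Finset.prod_const]
  simp_rw [key]
  have swap : (∑ σ : Equiv.Perm (Fin n),
        ∑ s ∈ (Finset.univ.filter fun i => σ i = i).powerset, x ^ s.card)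
      = ∑ s ∈ (Finset.univ : Finset (Fin n)).powerset,
          ∑ _σ ∈ (Finset.univ.filter fun σ : Equiv.Perm (Fin n) => ∀ i ∈ s, σ i = i),
            x ^ s.card := by
    refine Finset.sum_comm' ?_
    intro σ s
    simp [Finset.mem_powerset, Finset.subset_iff, Finset.mem_filter, Finset.subset_univ]
  rw [swap]
  have count : ∀ s ∈ (Finset.univ : Finset (Fin n)).powerset,
      (∑ _σ ∈ (Finset.univ.filter fun σ : Equiv.Perm (Fin n) => ∀ i ∈ s, σ i = i),
          x ^ s.card) = ((n - s.card).factorial : ℝ) * x ^ s.card := by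
    intro s _
    rw [Finset.sum_const, card_fixing_aux, nsmul_eq_mul]
  rw [Finset.sum_congr rfl count]
  rw [Finset.sum_powerset]
  have inner : ∀ j ∈ Finset.range ((Finset.univ : Finset (Fin n)).card + 1),
      (∑ s ∈ Finset.powersetCard j (Finset.univ : Finset (Fin n)),
          ((n - s.card).factorial : ℝ) * x ^ s.card)
        = (n.choose j : ℝ) * (((n - j).factorial : ℝ) * x ^ j) := by
    intro j _
    rw [Finset.sum_congr rfl (fun s hs => by
      rw [(Finset.mem_powersetCard.mp hs).2]), Finset.sum_const,
      Finset.card_powersetCard, Finset.card_univ, Fintype.card_fin, nsmul_eq_mul]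
  rw [Finset.sum_congr rfl inner, Finset.card_univ, Fintype.card_fin]
  have termeq : ∀ j ∈ Finset.range (n + 1),
      (n.choose j : ℝ) * (((n - j).factorial : ℝ) * x ^ j)
        = (n.factorial : ℝ) * (x ^ j / (j.factorial : ℝ)) := by
    intro j hj
    have hjn : j ≤ n := Nat.lt_succ_iff.mp (Finset.mem_range.mp hj)
    have h := Nat.choose_mul_factorial_mul_factorial hjn
    have hcast : (n.choose j : ℝ) * (j.factorial : ℝ) * ((n - j).factorial : ℝ)
        = (n.factorial : ℝ) := by exact_mod_cast congrArg Nat.cast h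
    have hjf : (j.factorial : ℝ) ≠ 0 := by
      exact_mod_cast j.factorial_pos.ne'
    have : (n.choose j : ℝ) * (((n - j).factorial : ℝ) * x ^ j)
        = ((n.choose j : ℝ) * (j.factorial : ℝ) * ((n - j).factorial : ℝ))
            * (x ^ j / (j.factorial : ℝ)) := by
      field_simp
    rw [this, hcast]
  rw [Finset.sum_congr rfl termeq, ← Finset.mul_sum]
  have hsum : (∑ j ∈ Finset.range (n + 1), x ^ j / (j.factorial : ℝ)) ≤ Real.exp x :=
    Real.sum_le_exp_of_nonneg hx0 (n + 1)
  have hcard : ((Fintype.card (Equiv.Perm (Fin n)) : ℝ)) = (n.factorial : ℝ) := by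
    rw [Fintype.card_perm, Fintype.card_fin]
  rw [hcard, hxdef] at *
  have hnf : (0:ℝ) < (n.factorial : ℝ) := by exact_mod_cast n.factorial_pos
  rw [inv_mul_le_iff₀ hnf]
  exact mul_le_mul_of_nonneg_left hsum hnf.le
end

section
/- Let $H \sim \mathrm{Hypergeometric}(n,k,k)$, let $G_m$ be a symmetric $\pm 1$ random walk stopped at step $m$ (independent of $H$), and fix $d \geq 2$. There exists a small constant $c > 0$ and a function $g : (0,c) \to (1,\infty)$ with $g(0+) = 1$ such that for every $a \in (0,c)$, setting $t = \frac{a}{k^{d-1}}\log\frac{en}{k}$, we have $\mathbb{E}[\exp(t G_H^d)] \leq g(a)$. -/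
open Filter

set_option maxHeartbeats 1000000



lemma aux_step (σ x : ℝ) (hσ : 0 ≤ σ) :
    Real.exp (σ * ((1:ℝ) + x) ^ 2) + Real.exp (σ * (-1 + x) ^ 2)
      ≤ 2 * Real.exp σ * Real.exp ((σ + 2 * σ ^ 2) * x ^ 2) := by
  have h1 : σ * ((1:ℝ) + x) ^ 2 = (σ * x ^ 2 + σ) + 2 * σ * x := by ring
  have h2 : σ * ((-1:ℝ) + x) ^ 2 = (σ * x ^ 2 + σ) + -(2 * σ * x) := by ring
  have e1 : Real.exp (σ * ((1:ℝ) + x) ^ 2)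
      = Real.exp (σ * x ^ 2 + σ) * Real.exp (2 * σ * x) := by
    rw [← Real.exp_add]; exact congrArg Real.exp (by ring)
  have e2 : Real.exp (σ * ((-1:ℝ) + x) ^ 2)
      = Real.exp (σ * x ^ 2 + σ) * Real.exp (-(2 * σ * x)) := by
    rw [← Real.exp_add]; exact congrArg Real.exp (by ring)
  rw [e1, e2, ← mul_add]
  have hcosh := Real.cosh_le_exp_half_sq (2 * σ * x)
  rw [Real.cosh_eq] at hcosh
  have h3 : Real.exp (2*σ*x) + Real.exp (-(2*σ*x)) ≤ 2 * Real.exp ((2*σ*x)^2/2) := by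
    linarith
  calc Real.exp (σ * x ^ 2 + σ) * (Real.exp (2*σ*x) + Real.exp (-(2*σ*x)))
      ≤ Real.exp (σ * x ^ 2 + σ) * (2 * Real.exp ((2*σ*x)^2/2)) := by
        apply mul_le_mul_of_nonneg_left h3 (Real.exp_nonneg _)
    _ = 2 * (Real.exp (σ * x ^ 2 + σ) * Real.exp ((2*σ*x)^2/2)) := by ring
    _ = 2 * (Real.exp σ * Real.exp ((σ + 2 * σ ^ 2) * x ^ 2)) := by
        rw [← Real.exp_add, ← Real.exp_add]
        congr 1; ring
    _ = 2 * Real.exp σ * Real.exp ((σ + 2 * σ ^ 2) * x ^ 2) := by ring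

lemma aux_walk (h : ℕ) : ∀ σ : ℝ, 0 ≤ σ → 8 * σ * h ≤ 1 →
    ((2:ℝ) ^ h)⁻¹ * ∑ ε : Fin h → Bool,
        Real.exp (σ * (∑ i, (if ε i then (1:ℝ) else -1)) ^ 2)
      ≤ Real.exp (2 * σ * h) := by
  induction h with
  | zero => intro σ hσ _; simp
  | succ m ih =>
    intro σ hσ hbound
    have hσm : 8 * σ * m ≤ 1 - 8 * σ := by push_cast at hbound ⊢; nlinarith
    set σ' : ℝ := σ + 2 * σ ^ 2 with hσ'def
    have hσ'0 : 0 ≤ σ' := by positivity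
    have hσ'm : 8 * σ' * m ≤ 1 := by
      have : (16 * σ ^ 2) * m ≤ 2 * σ := by nlinarith
      push_cast at hσm ⊢; nlinarith
    have key := ih σ' hσ'0 hσ'm
    -- reindex the sum
    have reind : ∑ ε : Fin (m+1) → Bool,
        Real.exp (σ * (∑ i, (if ε i then (1:ℝ) else -1)) ^ 2)
        = ∑ ε : Fin m → Bool, ∑ b : Bool,
            Real.exp (σ * ((if b then (1:ℝ) else -1) + ∑ i, (if ε i then (1:ℝ) else -1)) ^ 2) := by
      rw [← (Fin.consEquiv (fun _ : Fin (m+1) => Bool)).sum_comp]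
      rw [Fintype.sum_prod_type, Finset.sum_comm]
      congr 1; ext ε; congr 1; ext b
      congr 2
      rw [Fin.sum_univ_succ]
      simp [Fin.consEquiv]
    have step : ∀ ε : Fin m → Bool,
        (∑ b : Bool, Real.exp (σ * ((if b then (1:ℝ) else -1)
            + ∑ i, (if ε i then (1:ℝ) else -1)) ^ 2))
        ≤ 2 * Real.exp σ *
            Real.exp (σ' * (∑ i, (if ε i then (1:ℝ) else -1)) ^ 2) := by
      intro ε
      rw [Fintype.sum_bool]
      simpa using aux_step σ (∑ i, (if ε i then (1:ℝ) else -1)) hσ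
    have hsum : ∑ ε : Fin (m+1) → Bool,
        Real.exp (σ * (∑ i, (if ε i then (1:ℝ) else -1)) ^ 2)
        ≤ 2 * Real.exp σ * ∑ ε : Fin m → Bool,
            Real.exp (σ' * (∑ i, (if ε i then (1:ℝ) else -1)) ^ 2) := by
      rw [reind, Finset.mul_sum]
      exact Finset.sum_le_sum fun ε _ => step ε
    have h2pos : (0:ℝ) < ((2:ℝ) ^ (m+1))⁻¹ := by positivity
    calc ((2:ℝ) ^ (m+1))⁻¹ * ∑ ε : Fin (m+1) → Bool,
          Real.exp (σ * (∑ i, (if ε i then (1:ℝ) else -1)) ^ 2)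
        ≤ ((2:ℝ) ^ (m+1))⁻¹ * (2 * Real.exp σ * ∑ ε : Fin m → Bool,
            Real.exp (σ' * (∑ i, (if ε i then (1:ℝ) else -1)) ^ 2)) :=
          mul_le_mul_of_nonneg_left hsum (le_of_lt h2pos)
      _ = Real.exp σ * (((2:ℝ) ^ m)⁻¹ * ∑ ε : Fin m → Bool,
            Real.exp (σ' * (∑ i, (if ε i then (1:ℝ) else -1)) ^ 2)) := by
          rw [pow_succ]; ring
      _ ≤ Real.exp σ * Real.exp (2 * σ' * m) :=
          mul_le_mul_of_nonneg_left key (Real.exp_nonneg _)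
      _ ≤ Real.exp (2 * σ * (m+1)) := by
          rw [← Real.exp_add, Real.exp_le_exp]
          push_cast
          push_cast
          nlinarith [mul_nonneg hσ (Nat.cast_nonneg (α := ℝ) m)]
      _ = Real.exp (2 * σ * ((m+1 : ℕ):ℝ)) := by norm_num


lemma aux_choose_ratio (n k : ℕ) (hk : k ≤ n) :
    ∀ h, h ≤ k → n.choose (k - h) * (n - k + 1) ^ h ≤ n.choose k * k ^ h := by
  intro h
  induction h with
  | zero => simp
  | succ m ih =>
    intro hm
    have ihm := ih (by omega)
    have key : n.choose (k - (m+1)) * (n - k + 1) ≤ n.choose (k - m) * k := by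
      have h1 := Nat.choose_succ_right_eq n (k - (m+1))
      rw [show k - (m+1) + 1 = k - m from by omega] at h1
      have h2 : n - k + 1 ≤ n - (k - (m+1)) := by omega
      calc n.choose (k - (m+1)) * (n - k + 1)
          ≤ n.choose (k - (m+1)) * (n - (k - (m+1))) := Nat.mul_le_mul_left _ h2
        _ = n.choose (k - m) * (k - m) := h1.symm
        _ ≤ n.choose (k - m) * k := Nat.mul_le_mul_left _ (by omega)
    calc n.choose (k - (m+1)) * (n - k + 1) ^ (m+1)
        = (n.choose (k - (m+1)) * (n - k + 1)) * (n - k + 1) ^ m := by ring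
      _ ≤ (n.choose (k - m) * k) * (n - k + 1) ^ m := Nat.mul_le_mul_right _ key
      _ = (n.choose (k - m) * (n - k + 1) ^ m) * k := by ring
      _ ≤ (n.choose k * k ^ m) * k := Nat.mul_le_mul_right _ ihm
      _ = n.choose k * k ^ (m+1) := by ring

lemma aux_vandermonde (n k : ℕ) (hk : k ≤ n) :
    ∑ h ∈ Finset.range (k+1), k.choose h * (n - k).choose (k - h) = n.choose k := by
  have h := Nat.add_choose_eq k (n - k) k
  rw [Nat.add_sub_cancel' hk] at h
  rw [h, Finset.Nat.sum_antidiagonal_eq_sum_range_succ_mk]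

lemma aux_mean (n k : ℕ) (hk1 : 1 ≤ k) (hkn : k ≤ n) :
    ∑ h ∈ Finset.range (k+1), h * (k.choose h * (n - k).choose (k - h))
      = k * (n-1).choose (k-1) := by
  rw [Finset.sum_range_succ']
  have f0 : 0 * (k.choose 0 * (n - k).choose (k - 0)) = 0 := by simp
  rw [f0, add_zero]
  have term : ∀ i, (i+1) * (k.choose (i+1) * (n - k).choose (k - (i+1)))
      = k * ((k-1).choose i * (n - k).choose ((k-1) - i)) := by
    intro i
    have h2 := Nat.add_one_mul_choose_eq (k-1) i
    rw [Nat.sub_add_cancel hk1] at h2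
    have h1 : (i+1) * k.choose (i+1) = k * (k-1).choose i := by
      rw [mul_comm]; exact h2.symm
    rw [show k - (i+1) = (k-1) - i from by omega, ← mul_assoc, h1, mul_assoc]
  simp_rw [term]
  rw [← Finset.mul_sum]
  congr 1
  have hv := aux_vandermonde (n-1) (k-1) (by omega)
  rw [show (n-1) - (k-1) = n - k from by omega] at hv
  rw [show k - 1 + 1 = k from by omega] at hv
  exact hv

lemma aux_absorb (n k : ℕ) (hk1 : 1 ≤ k) (hkn : k ≤ n) :
    k * n.choose k = n * (n-1).choose (k-1) := by
  have h2 := Nat.add_one_mul_choose_eq (n-1) (k-1)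
  rw [Nat.sub_add_cancel (le_trans hk1 hkn), show k - 1 + 1 = k from by omega] at h2
  rw [mul_comm]; exact h2.symm


lemma aux_exp_lin {y : ℝ} (h0 : 0 ≤ y) (h1 : y ≤ 1/2) : Real.exp y ≤ 1 + 2*y := by
  have h2 : 1 - y ≤ Real.exp (-y) := by linarith [Real.add_one_le_exp (-y)]
  have h3 : 0 < 1 - y := by linarith
  have h4 : Real.exp y * (1 - y) ≤ Real.exp y * Real.exp (-y) :=
    mul_le_mul_of_nonneg_left h2 (Real.exp_nonneg _)
  rw [← Real.exp_add] at h4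
  simp at h4
  -- exp y * (1 - y) ≤ 1
  have h5 : Real.exp y ≤ 1/(1-y) := by
    rw [le_div_iff₀ h3]; linarith
  have h6 : 1/(1-y) ≤ 1 + 2*y := by
    rw [div_le_iff₀ h3]; nlinarith
  linarith

lemma aux_abs_walk (h : ℕ) (ε : Fin h → Bool) :
    |∑ i, (if ε i then (1:ℝ) else -1)| ≤ (h:ℝ) := by
  calc |∑ i, (if ε i then (1:ℝ) else -1)| ≤ ∑ i, |if ε i then (1:ℝ) else -1| :=
        Finset.abs_sum_le_sum_abs _ _
    _ = ∑ _i : Fin h, (1:ℝ) := by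
        apply Finset.sum_congr rfl; intro i _; cases ε i <;> simp
    _ = (h:ℝ) := by simp

lemma aux_fact (h : ℕ) : ((h:ℝ))^h ≤ (h.factorial : ℝ) * Real.exp 1 ^ h := by
  have h1 : ((h:ℝ))^h / h.factorial ≤ Real.exp h := by
    calc ((h:ℝ))^h / h.factorial ≤ ∑ i ∈ Finset.range (h+1), (h:ℝ)^i / i.factorial := by
          exact Finset.single_le_sum (f := fun i => (h:ℝ)^i / (i.factorial : ℝ))
            (fun i _ => by positivity) (Finset.self_mem_range_succ h)
      _ ≤ Real.exp h := Real.sum_le_exp_of_nonneg (Nat.cast_nonneg h) (h+1)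
  rw [← Real.exp_one_pow] at h1
  have h2 : (0:ℝ) < h.factorial := by exact_mod_cast h.factorial_pos
  calc ((h:ℝ))^h = ((h:ℝ))^h / h.factorial * h.factorial := by field_simp
    _ ≤ Real.exp 1 ^ h * h.factorial := by
        apply mul_le_mul_of_nonneg_right h1 (le_of_lt h2)
    _ = (h.factorial : ℝ) * Real.exp 1 ^ h := by ring

lemma aux_geom_aux (Q : ℝ) (h0 : 0 ≤ Q) (h1 : Q ≤ 1/2) :
    ∀ M : ℕ, ∑ i ∈ Finset.range M, Q^i ≤ 2 := by
  intro M
  induction M with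
  | zero => simp
  | succ m ih =>
    rw [Finset.sum_range_succ']
    simp only [pow_succ, pow_zero]
    calc (∑ i ∈ Finset.range m, Q^i * Q) + 1 = Q * (∑ i ∈ Finset.range m, Q^i) + 1 := by
          rw [Finset.mul_sum]; congr 1; apply Finset.sum_congr rfl; intros; ring
      _ ≤ Q * 2 + 1 := by nlinarith [Finset.sum_nonneg (fun i (_ : i ∈ Finset.range m) => pow_nonneg h0 i)]
      _ ≤ 2 := by linarith

lemma aux_geom (Q : ℝ) (h0 : 0 ≤ Q) (h1 : Q ≤ 1/2) (M : ℕ) :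
    ∑ h ∈ Finset.range (M+1), (if h = 0 then 0 else Q^h) ≤ 2*Q := by
  rw [Finset.sum_range_succ']
  have e1 : ∀ i : ℕ, (if i + 1 = 0 then (0:ℝ) else Q^(i+1)) = Q^(i+1) := by
    intro i; simp
  simp only [e1]
  norm_num
  calc ∑ i ∈ Finset.range M, Q^(i+1) = Q * ∑ i ∈ Finset.range M, Q^i := by
        rw [Finset.mul_sum]; apply Finset.sum_congr rfl; intros; ring
    _ ≤ Q * 2 := mul_le_mul_of_nonneg_left (aux_geom_aux Q h0 h1 M) h0
    _ = 2*Q := by ring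

lemma aux_exp2 : Real.exp 2 ≤ 7.4 := by
  have he2 : Real.exp 2 = Real.exp 1 * Real.exp 1 := by
    rw [← Real.exp_add]; norm_num
  have h1 := Real.exp_one_lt_d9
  have h0 := Real.exp_pos 1
  nlinarith

lemma aux_kfact (k h : ℕ) (hh : 1 ≤ h) :
    (k:ℝ)^h / h.factorial ≤ (Real.exp 1 * ((k:ℝ)/h))^h := by
  have hhpos : (0:ℝ) < h := by exact_mod_cast hh
  have hfacpos : (0:ℝ) < h.factorial := by exact_mod_cast h.factorial_pos
  have haf := aux_fact h
  have hsplit : (Real.exp 1 * ((k:ℝ)/h))^h = Real.exp 1 ^h * (k:ℝ)^h / (h:ℝ)^h := by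
    rw [mul_pow, div_pow]; ring
  rw [hsplit, div_le_div_iff₀ hfacpos (by positivity)]
  nlinarith [mul_le_mul_of_nonneg_left haf
    (pow_nonneg (Nat.cast_nonneg k : (0:ℝ) ≤ (k:ℕ)) h)]

lemma aux_base {a y r s : ℝ} (ha : 0 < a) (hac : a < 1/2000) (hy0 : 0 ≤ y)
    (hr : r ≤ 8*a*(1+y)) (hr0 : 0 ≤ r) (hs : s ≤ 2*Real.exp (-y)) (hs0 : 0 ≤ s) :
    Real.exp 1 * r * s * Real.exp (a*(1+y)) ≤ 592*a := by
  have e1 : (0:ℝ) < Real.exp 1 := Real.exp_pos 1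
  have hexpaL : Real.exp (a*(1+y)) ≤ Real.exp (a + y/4) := by
    apply Real.exp_le_exp.mpr
    nlinarith [mul_le_mul_of_nonneg_right hac.le hy0]
  have hLe : (1:ℝ)+y ≤ 5*Real.exp (y/4) := by linarith [Real.add_one_le_exp (y/4)]
  have h8a : (0:ℝ) ≤ 8*a := by linarith
  have h8ay : (0:ℝ) ≤ 8*a*(1+y) := by nlinarith
  calc Real.exp 1 * r * s * Real.exp (a*(1+y))
      ≤ Real.exp 1 * (8*a*(1+y)) * (2*Real.exp (-y)) * Real.exp (a + y/4) := by
        apply mul_le_mul _ hexpaL (Real.exp_nonneg _) _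
        · apply mul_le_mul _ hs hs0 _
          · exact mul_le_mul_of_nonneg_left hr e1.le
          · exact mul_nonneg e1.le h8ay
        · exact mul_nonneg (mul_nonneg e1.le h8ay)
            (by positivity)
    _ ≤ Real.exp 1 * (8*a*(5*Real.exp (y/4))) * (2*Real.exp (-y))
        * Real.exp (a + y/4) := by
        apply mul_le_mul_of_nonneg_right _ (Real.exp_nonneg _)
        apply mul_le_mul_of_nonneg_right _ (by positivity)
        exact mul_le_mul_of_nonneg_left (mul_le_mul_of_nonneg_left hLe h8a) e1.le
    _ = 80*a * (Real.exp 1 * Real.exp (y/4) * Real.exp (-y) * Real.exp (a + y/4)) := by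
        ring
    _ = 80*a * Real.exp (1 + y/4 + -y + (a + y/4)) := by
        rw [← Real.exp_add, ← Real.exp_add, ← Real.exp_add]
    _ ≤ 80*a * Real.exp 2 := by
        apply mul_le_mul_of_nonneg_left _ (by linarith : (0:ℝ) ≤ 80*a)
        apply Real.exp_le_exp.mpr
        linarith
    _ ≤ 80*a * 7.4 := mul_le_mul_of_nonneg_left aux_exp2 (by linarith)
    _ = 592*a := by ring

lemma aux_main (d : ℕ) (hd : 2 ≤ d) (a : ℝ) (ha : 0 < a) (hac : a < 1/2000)
    (n k : ℕ) (hk1 : 1 ≤ k) (hkn : k ≤ n) :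
    ∑ h ∈ Finset.range (k + 1),
      (((k.choose h * (n - k).choose (k - h) : ℕ) : ℝ) / (n.choose k)) *
        (((2:ℝ) ^ h)⁻¹ * ∑ ε : Fin h → Bool,
          Real.exp ((a / (k : ℝ) ^ (d - 1) * Real.log (Real.exp 1 * n / k)) *
            (∑ i, (if ε i then (1:ℝ) else -1)) ^ d))
      ≤ 1 + 1188 * a := by
  have hk0 : (0:ℝ) < k := by exact_mod_cast hk1
  have hn0 : (0:ℝ) < n := by exact_mod_cast lt_of_lt_of_le hk1 hkn
  have hKN : (k:ℝ) ≤ (n:ℝ) := by exact_mod_cast hkn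
  set y : ℝ := Real.log ((n:ℝ)/k) with hy
  have hy0 : 0 ≤ y := Real.log_nonneg (by rw [le_div_iff₀ hk0]; linarith)
  have hexpy : Real.exp y = (n:ℝ)/k := Real.exp_log (by positivity)
  have hexpny : Real.exp (-y) = (k:ℝ)/n := by rw [Real.exp_neg, hexpy, inv_div]
  set L : ℝ := Real.log (Real.exp 1 * n / k) with hLdef
  have hL : L = 1 + y := by
    rw [hLdef, mul_div_assoc, Real.log_mul (Real.exp_ne_zero 1) (by positivity),
      Real.log_exp, hy]
  have hL1 : 1 ≤ L := by rw [hL]; linarith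
  have hL0 : 0 < L := by linarith
  set t : ℝ := a / (k : ℝ) ^ (d - 1) * L with htdef
  have ht0 : 0 ≤ t := mul_nonneg (div_nonneg ha.le (by positivity)) hL0.le
  have hkpow : (0:ℝ) < (k:ℝ)^(d-1) := by positivity
  set P : ℕ → ℝ := fun h => (((k.choose h * (n - k).choose (k - h) : ℕ) : ℝ) / (n.choose k))
    with hP
  have hCpos : (0:ℝ) < (n.choose k : ℝ) := by exact_mod_cast Nat.choose_pos hkn
  have hP0 : ∀ h, 0 ≤ P h := fun h => by rw [hP]; positivity
  have key : ∀ h ∈ Finset.range (k+1),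
      P h * (((2:ℝ) ^ h)⁻¹ * ∑ ε : Fin h → Bool,
          Real.exp (t * (∑ i, (if ε i then (1:ℝ) else -1)) ^ d))
      ≤ P h + (4*a*L/k) * ((h:ℝ) * P h) + (if h = 0 then 0 else (592*a)^h) := by
    intro h hh
    have hhk : h ≤ k := by
      have := Finset.mem_range.mp hh; omega
    have hhkR : (h:ℝ) ≤ k := by exact_mod_cast hhk
    have hh0 : (0:ℝ) ≤ h := Nat.cast_nonneg h
    have hd1 : d - 1 = (d - 2) + 1 := by omega
    set e : ℕ := d - 2 with he
    set X : (Fin h → Bool) → ℝ := fun ε => ∑ i, (if ε i then (1:ℝ) else -1) with hX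
    have hXa : ∀ ε, |X ε| ≤ (h:ℝ) := fun ε => aux_abs_walk h ε
    have hXd : ∀ ε, (X ε)^d ≤ (h:ℝ)^e * (X ε)^2 := by
      intro ε
      calc (X ε)^d ≤ |(X ε)^d| := le_abs_self _
        _ = |X ε|^d := abs_pow _ _
        _ = |X ε|^e * |X ε|^2 := by rw [← pow_add]; congr 1; omega
        _ ≤ (h:ℝ)^e * (X ε)^2 := by
            rw [sq_abs]
            exact mul_le_mul_of_nonneg_right
              (pow_le_pow_left₀ (abs_nonneg _) (hXa ε) e) (sq_nonneg _)
    have hitenn : (0:ℝ) ≤ (if h = 0 then 0 else (592*a)^h) := by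
      split
      · exact le_refl 0
      · exact pow_nonneg (by linarith) h
    by_cases hA : 8 * (t * (h:ℝ)^e) * (h:ℝ) ≤ 1
    · -- small-h regime: quadratic mgf bound
      set σ : ℝ := t * (h:ℝ)^e with hσ
      have hσ0 : 0 ≤ σ := mul_nonneg ht0 (by positivity)
      have hσh0 : 0 ≤ σ * h := mul_nonneg hσ0 hh0
      have hwalk := aux_walk h σ hσ0 hA
      have hmono : ((2:ℝ)^h)⁻¹ * ∑ ε : Fin h → Bool, Real.exp (t * (X ε)^d)
          ≤ ((2:ℝ)^h)⁻¹ * ∑ ε : Fin h → Bool, Real.exp (σ * (X ε)^2) := by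
        apply mul_le_mul_of_nonneg_left _ (by positivity)
        apply Finset.sum_le_sum
        intro ε _
        apply Real.exp_le_exp.mpr
        calc t * (X ε)^d ≤ t * ((h:ℝ)^e * (X ε)^2) :=
              mul_le_mul_of_nonneg_left (hXd ε) ht0
          _ = σ * (X ε)^2 := by rw [hσ]; ring
      have hσh : σ * h ≤ a*L*h/k := by
        rw [hσ, htdef, hd1]
        rw [div_mul_eq_mul_div, div_mul_eq_mul_div, div_mul_eq_mul_div,
          div_le_div_iff₀ (by positivity) hk0]
        have h7 : (h:ℝ)^e * k ≤ (k:ℝ)^e * k :=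
          mul_le_mul_of_nonneg_right (pow_le_pow_left₀ hh0 hhkR e) hk0.le
        calc a * L * (h:ℝ)^e * (h:ℝ) * k = (a*L*h) * ((h:ℝ)^e * k) := by ring
          _ ≤ (a*L*h) * ((k:ℝ)^e * k) :=
              mul_le_mul_of_nonneg_left h7
                (mul_nonneg (mul_nonneg ha.le hL0.le) hh0)
          _ = a*L*(h:ℝ) * (k:ℝ)^(e+1) := by rw [pow_succ]
      have hexp : Real.exp (2*σ*h) ≤ 1 + 4*(σ*h) := by
        have h1 : 0 ≤ 2*σ*(h:ℝ) := by linarith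
        have h2 : 2*σ*(h:ℝ) ≤ 1/2 := by linarith
        calc Real.exp (2*σ*h) ≤ 1 + 2*(2*σ*h) := aux_exp_lin h1 h2
          _ = 1 + 4*(σ*h) := by ring
      have hfin : ((2:ℝ)^h)⁻¹ * ∑ ε : Fin h → Bool, Real.exp (t * (X ε)^d)
          ≤ 1 + (4*a*L/k)*(h:ℝ) := by
        calc ((2:ℝ)^h)⁻¹ * ∑ ε : Fin h → Bool, Real.exp (t * (X ε)^d)
            ≤ Real.exp (2*σ*h) := le_trans hmono hwalk
          _ ≤ 1 + 4*(σ*h) := hexp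
          _ ≤ 1 + (4*a*L/k)*(h:ℝ) := by
              have h8 : (4:ℝ)*(σ*h) ≤ 4*(a*L*h/k) := by linarith
              have h9 : (4:ℝ)*(a*L*(h:ℝ)/k) = (4*a*L/k)*(h:ℝ) := by ring
              linarith
      calc P h * (((2:ℝ)^h)⁻¹ * ∑ ε : Fin h → Bool, Real.exp (t * (X ε)^d))
          ≤ P h * (1 + (4*a*L/k)*(h:ℝ)) := mul_le_mul_of_nonneg_left hfin (hP0 h)
        _ = P h + (4*a*L/k) * ((h:ℝ)*P h) := by ring
        _ ≤ P h + (4*a*L/k) * ((h:ℝ)*P h) + (if h = 0 then 0 else (592*a)^h) := by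
            linarith
    · -- large-h regime: crude bound + hypergeometric tail
      push_neg at hA
      have hh1 : 1 ≤ h := by
        rcases Nat.eq_zero_or_pos h with h0 | h1
        · subst h0; norm_num at hA
        · exact h1
      have hhpos : (0:ℝ) < h := by exact_mod_cast hh1
      -- key consequences of ¬A
      have hb1 : (k:ℝ)^(e+1) < 8*a*L*(h:ℝ)^(e+1) := by
        have hq : (k:ℝ)^(e+1) * (8 * (t * (h:ℝ)^e) * (h:ℝ)) = 8*a*L*(h:ℝ)^(e+1) := by
          rw [htdef, hd1, pow_succ]
          field_simp
          ring
        calc (k:ℝ)^(e+1) = (k:ℝ)^(e+1) * 1 := by ring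
          _ < (k:ℝ)^(e+1) * (8 * (t * (h:ℝ)^e) * (h:ℝ)) := by
              apply mul_lt_mul_of_pos_left hA (by positivity)
          _ = 8*a*L*(h:ℝ)^(e+1) := hq
      have hpowhk : (h:ℝ)^(e+1) ≤ (k:ℝ)^(e+1) := pow_le_pow_left₀ hh0 hhkR _
      have haL0 : (0:ℝ) ≤ 8*a*L := by nlinarith [mul_pos ha hL0]
      have hβ1 : 1 < 8*a*L := by
        nlinarith [mul_le_mul_of_nonneg_left hpowhk haL0, pow_pos hk0 (e+1)]
      have hkh : (k:ℝ) < 8*a*L*h := by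
        by_contra hc
        push_neg at hc
        have h1 : (8*a*L*(h:ℝ))^(e+1) ≤ (k:ℝ)^(e+1) :=
          pow_le_pow_left₀ (by nlinarith [mul_pos (mul_pos ha hL0) hhpos]) hc _
        rw [mul_pow] at h1
        have h2 : 8*a*L ≤ (8*a*L)^(e+1) := le_self_pow₀ (le_of_lt hβ1) (Nat.succ_ne_zero e)
        nlinarith [pow_pos hhpos (e+1),
          mul_le_mul_of_nonneg_right h2 (pow_nonneg hh0 (e+1))]
      have hb2 : 1 < 8*a*(1+y) := by rw [← hL]; exact hβ1
      have hy2 : 2 ≤ y := by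
        nlinarith [mul_nonneg (sub_nonneg.mpr hac.le) (show (0:ℝ) ≤ 1+y by linarith)]
      have hn2k : 2*(k:ℝ) ≤ n := by
        have h3 := Real.add_one_le_exp y
        rw [hexpy] at h3
        have h4 : (2:ℝ) ≤ (n:ℝ)/k := by linarith
        rw [le_div_iff₀ hk0] at h4
        linarith
      have hncast : ((n-k : ℕ):ℝ) = (n:ℝ) - k := Nat.cast_sub hkn
      -- Step 1 : inner expectation ≤ exp(aLh)
      have hstep1 : ((2:ℝ)^h)⁻¹ * ∑ ε : Fin h → Bool, Real.exp (t * (X ε)^d)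
          ≤ Real.exp (a*L*h) := by
        have hpt : ∀ ε : Fin h → Bool, Real.exp (t * (X ε)^d) ≤ Real.exp (a*L*h) := by
          intro ε
          apply Real.exp_le_exp.mpr
          have hx1 : (X ε)^d ≤ (h:ℝ)^d := by
            calc (X ε)^d ≤ |(X ε)^d| := le_abs_self _
              _ = |X ε|^d := abs_pow _ _
              _ ≤ (h:ℝ)^d := pow_le_pow_left₀ (abs_nonneg _) (hXa ε) d
          have hx2 : t * (h:ℝ)^d ≤ a*L*h := by
            have hdd : d = (e+1)+1 := by omega
            have hsplit : (h:ℝ)^d = (h:ℝ) * (h:ℝ)^(e+1) := by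
              rw [hdd, pow_succ]; ring
            rw [htdef, hd1, hsplit, div_mul_eq_mul_div, div_mul_eq_mul_div,
              div_le_iff₀ (by positivity)]
            nlinarith [mul_nonneg (mul_nonneg ha.le hL0.le) hh0, hpowhk,
              mul_le_mul_of_nonneg_left hpowhk
                (mul_nonneg (mul_nonneg ha.le hL0.le) hh0)]
          calc t * (X ε)^d ≤ t * (h:ℝ)^d := mul_le_mul_of_nonneg_left hx1 ht0
            _ ≤ a*L*h := hx2
        have hcard : ∑ ε : Fin h → Bool, Real.exp (t * (X ε)^d)
            ≤ (2:ℝ)^h * Real.exp (a*L*h) := by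
          calc ∑ ε : Fin h → Bool, Real.exp (t * (X ε)^d)
              ≤ ∑ _ε : Fin h → Bool, Real.exp (a*L*h) :=
                Finset.sum_le_sum (fun ε _ => hpt ε)
            _ = (2:ℝ)^h * Real.exp (a*L*h) := by
                rw [Finset.sum_const, Finset.card_univ]
                simp [nsmul_eq_mul]
        rw [inv_mul_le_iff₀ (by positivity)]
        exact hcard
      -- Step 2 : hypergeometric tail bound
      have hden0 : (0:ℝ) < ((n-k:ℕ):ℝ)+1 := by positivity
      have hstep2 : P h ≤ ((k:ℝ)^h / h.factorial) * ((k:ℝ)/(((n-k:ℕ):ℝ)+1))^h := by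
        have hc1 : (k.choose h : ℝ) ≤ (k:ℝ)^h / h.factorial := Nat.choose_le_pow_div h k
        have hc2 : (((n-k).choose (k-h) : ℕ) : ℝ) / (n.choose k)
            ≤ ((k:ℝ)/(((n-k:ℕ):ℝ)+1))^h := by
          have hnat : (n-k).choose (k-h) * (n-k+1)^h ≤ n.choose k * k^h := by
            calc (n-k).choose (k-h) * (n-k+1)^h
                ≤ n.choose (k-h) * (n-k+1)^h :=
                  Nat.mul_le_mul_right _ (Nat.choose_le_choose _ (Nat.sub_le n k))
              _ ≤ n.choose k * k^h := aux_choose_ratio n k hkn h hhk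
          rw [div_pow, div_le_div_iff₀ hCpos (by positivity)]
          rw [mul_comm ((k:ℝ)^h) ((n.choose k : ℕ):ℝ)]
          have : ((((n-k).choose (k-h)) : ℕ):ℝ) * (((n-k:ℕ):ℝ)+1)^h
              ≤ ((n.choose k : ℕ):ℝ) * (k:ℝ)^h := by exact_mod_cast hnat
          exact this
        have hPsplit : P h = ((k.choose h : ℕ):ℝ)
            * ((((n-k).choose (k-h) : ℕ):ℝ) / (n.choose k)) := by
          rw [hP]; push_cast; ring
        rw [hPsplit]
        apply mul_le_mul hc1 hc2 (by positivity) (by positivity)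
      -- Step 3: base of geometric bound
      have hKH : (k:ℝ)/h ≤ 8*a*L := by
        rw [div_le_iff₀ hhpos]; linarith
      have hKn2 : (k:ℝ)/(((n-k:ℕ):ℝ)+1) ≤ 2*Real.exp (-y) := by
        rw [div_le_iff₀ hden0, hexpny, hncast]
        have h9 : 2*((k:ℝ)/n)*((n:ℝ)-k+1) = 2*(k:ℝ)*((n:ℝ)-k+1)/n := by ring
        rw [h9, le_div_iff₀ hn0]
        nlinarith
      have hbase : Real.exp 1 * ((k:ℝ)/h) * ((k:ℝ)/(((n-k:ℕ):ℝ)+1)) * Real.exp (a*L)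
          ≤ 592*a := by
        have hKH' : (k:ℝ)/h ≤ 8*a*(1+y) := by rw [← hL]; exact hKH
        have hout := aux_base ha hac hy0 hKH' (by positivity) hKn2 (by positivity)
        rw [← hL] at hout
        exact hout
      -- Step 4: combine
      have hfactle : (k:ℝ)^h / h.factorial ≤ (Real.exp 1 * ((k:ℝ)/h))^h :=
        aux_kfact k h hh1
      have hPP : P h * Real.exp (a*L*(h:ℝ)) ≤ (592*a)^h := by
        have hexph : Real.exp (a*L*(h:ℝ)) = Real.exp (a*L) ^ h := by
          rw [show a*L*(h:ℝ) = (h:ℝ)*(a*L) by ring, Real.exp_nat_mul]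
        calc P h * Real.exp (a*L*(h:ℝ))
            ≤ (((k:ℝ)^h / h.factorial) * ((k:ℝ)/(((n-k:ℕ):ℝ)+1))^h)
              * Real.exp (a*L) ^ h := by
              rw [hexph]
              apply mul_le_mul hstep2 le_rfl (by positivity) _
              positivity
          _ ≤ ((Real.exp 1 * ((k:ℝ)/h))^h * ((k:ℝ)/(((n-k:ℕ):ℝ)+1))^h)
              * Real.exp (a*L) ^ h := by
              apply mul_le_mul_of_nonneg_right _ (by positivity)
              apply mul_le_mul_of_nonneg_right hfactle (by positivity)
          _ = (Real.exp 1 * ((k:ℝ)/h) * ((k:ℝ)/(((n-k:ℕ):ℝ)+1)) * Real.exp (a*L))^h := by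
              rw [← mul_pow, ← mul_pow]
          _ ≤ (592*a)^h := pow_le_pow_left₀ (by positivity) hbase h
      calc P h * (((2:ℝ)^h)⁻¹ * ∑ ε : Fin h → Bool, Real.exp (t * (X ε)^d))
          ≤ P h * Real.exp (a*L*(h:ℝ)) := mul_le_mul_of_nonneg_left hstep1 (hP0 h)
        _ ≤ (592*a)^h := hPP
        _ ≤ P h + (4*a*L/k) * ((h:ℝ)*P h) + (if h = 0 then 0 else (592*a)^h) := by
            rw [if_neg (by omega : ¬ h = 0)]
            have h10 : 0 ≤ P h := hP0 h
            have h11 : 0 ≤ (4*a*L/k)*((h:ℝ)*P h) := by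
              apply mul_nonneg (by positivity) (mul_nonneg hh0 (hP0 h))
            linarith
  have hsum1 : ∑ h ∈ Finset.range (k+1), P h = 1 := by
    rw [hP]
    rw [← Finset.sum_div, ← Nat.cast_sum, aux_vandermonde n k hkn]
    exact div_self (ne_of_gt hCpos)
  have hsum2 : ∑ h ∈ Finset.range (k+1), (h:ℝ) * P h = (k:ℝ)^2 / n := by
    have e1 : ∀ h : ℕ, (h:ℝ) * P h
        = ((h * (k.choose h * (n - k).choose (k - h)) : ℕ) : ℝ) / (n.choose k) := by
      intro h; rw [hP]; push_cast; ring
    simp only [e1]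
    rw [← Finset.sum_div, ← Nat.cast_sum, aux_mean n k hk1 hkn, div_eq_div_iff (ne_of_gt hCpos) (ne_of_gt hn0)]
    have hnat : k * (n-1).choose (k-1) * n = k^2 * n.choose k := by
      rw [mul_assoc, mul_comm ((n-1).choose (k-1)) n, ← aux_absorb n k hk1 hkn]; ring
    exact_mod_cast hnat
  have hmid : (4*a*L/k) * ((k:ℝ)^2/n) ≤ 4*a := by
    have h1 : (4*a*L/k) * ((k:ℝ)^2/n) = 4*a*(L * ((k:ℝ)/n)) := by field_simp
    have h2 : L * ((k:ℝ)/n) ≤ 1 := by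
      rw [← hexpny, hL]
      have h3 := mul_le_mul_of_nonneg_right (Real.add_one_le_exp y) (Real.exp_pos (-y)).le
      rw [← Real.exp_add] at h3
      simp only [add_neg_cancel, Real.exp_zero] at h3
      nlinarith [Real.exp_pos (-y)]
    rw [h1]
    nlinarith
  have hgeom : ∑ h ∈ Finset.range (k+1), (if h = 0 then 0 else (592*a)^h) ≤ 1184*a := by
    have := aux_geom (592*a) (by linarith) (by linarith) k
    linarith
  calc ∑ h ∈ Finset.range (k + 1),
        P h * (((2:ℝ) ^ h)⁻¹ * ∑ ε : Fin h → Bool,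
          Real.exp (t * (∑ i, (if ε i then (1:ℝ) else -1)) ^ d))
      ≤ ∑ h ∈ Finset.range (k+1),
          (P h + (4*a*L/k) * ((h:ℝ) * P h) + (if h = 0 then 0 else (592*a)^h)) :=
        Finset.sum_le_sum key
    _ = (∑ h ∈ Finset.range (k+1), P h)
        + (4*a*L/k) * (∑ h ∈ Finset.range (k+1), (h:ℝ) * P h)
        + ∑ h ∈ Finset.range (k+1), (if h = 0 then 0 else (592*a)^h) := by
        rw [Finset.sum_add_distrib, Finset.sum_add_distrib, Finset.mul_sum]
    _ ≤ 1 + 4*a + 1184*a := by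
        rw [hsum1, hsum2]
        have h5 := hmid
        have h6 := hgeom
        linarith
    _ ≤ 1 + 1188 * a := by linarith

/-- MGF bound for a power of a stopped random walk (Lemma on `E exp(t G_H^d)`).
Fix `d ≥ 2`.  There are `c > 0` and `g : (0, c) → (1, ∞)` with `g(0+) = 1` such that
for every `a ∈ (0, c)`, for all sufficiently large `k` and all `n ≥ k`, taking
`t = (a/k^{d-1}) log(en/k)`, `H ∼ Hypergeometric(n, k, k)` and `G_h` the symmetric
`±1` random walk stopped at step `h` (independent of `H`):
`E[exp(t G_H^d)] ≤ g(a)`. -/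
theorem stmt_15 (d : ℕ) (hd : 2 ≤ d) :
    ∃ c > (0:ℝ), ∃ g : ℝ → ℝ,
      (∀ a : ℝ, 0 < a → a < c → 1 < g a) ∧
      Tendsto g (nhdsWithin 0 (Set.Ioi 0)) (nhds 1) ∧
      ∀ a : ℝ, 0 < a → a < c → ∃ k₀ : ℕ, ∀ n k : ℕ, k₀ ≤ k → k ≤ n →
        ∑ h ∈ Finset.range (k + 1),
          (((k.choose h * (n - k).choose (k - h) : ℕ) : ℝ) / (n.choose k)) *
            (((2:ℝ) ^ h)⁻¹ *
              ∑ ε : Fin h → Bool,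
                Real.exp ((a / (k : ℝ) ^ (d - 1) *
                    Real.log (Real.exp 1 * n / k)) *
                  (∑ i, (if ε i then (1:ℝ) else -1)) ^ d)) ≤ g a := by
  refine ⟨1/2000, by norm_num, fun a => 1 + 1188*a, fun a ha _ => by show (1:ℝ) < 1 + 1188*a; linarith, ?_, ?_⟩
  · have hc : Continuous (fun a : ℝ => 1 + 1188*a) := by continuity
    have h2 := (hc.tendsto 0).mono_left
      (nhdsWithin_le_nhds (s := Set.Ioi (0:ℝ)))
    simpa using h2
  · intro a ha hac
    exact ⟨1, fun n k hk1 hkn => aux_main d hd a ha hac n k hk1 hkn⟩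
end

section
/- Let $X \sim \mathrm{Hypergeometric}(n,k,k)$ and $Y \sim \mathrm{Binomial}(k, \frac{k}{n-k})$ where $n \geq 2k$. Then $Y$ stochastically dominates $X$; consequently for every nondecreasing function $f$, $\mathbb{E}[f(X)] \leq \mathbb{E}[f(Y)]$, and in particular $\mathbb{E}[e^{sX}] \leq (1 + \frac{k}{n-k}(e^s - 1))^k$ for any $s \geq 0$. -/
open Finset

private noncomputable def hypPMF (n k : ℕ) : ℕ → ℝ :=
  fun x => ((k.choose x * (n - k).choose (k - x) : ℕ) : ℝ) / (n.choose k)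

private noncomputable def binPMF (n k : ℕ) : ℕ → ℝ :=
  fun y => (k.choose y : ℝ) * ((k : ℝ) / ((n : ℝ) - (k : ℝ))) ^ y *
    (1 - (k : ℝ) / ((n : ℝ) - (k : ℝ))) ^ (k - y)

private lemma mlr_nat (n k x : ℕ) (hnk : 2 * k ≤ n) (hx : x < k) :
    (n - 2 * k) * (n - k).choose (k - (x + 1)) ≤ k * (n - k).choose (k - x) := by
  have hj : k - x = (k - (x + 1)) + 1 := by omega
  have hid := Nat.choose_succ_right_eq (n - k) (k - (x + 1))
  have hmj : n - k - (k - (x + 1)) = (n - 2 * k) + (x + 1) := by omega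
  rw [hj]
  have h1 : (n - 2 * k) * (n - k).choose (k - (x + 1)) * ((k - (x + 1)) + 1)
      ≤ k * (n - k).choose ((k - (x + 1)) + 1) * ((k - (x + 1)) + 1) := by
    calc (n - 2 * k) * (n - k).choose (k - (x + 1)) * ((k - (x + 1)) + 1)
        = (n - k).choose (k - (x + 1)) * ((n - 2 * k) * ((k - (x + 1)) + 1)) := by ring
      _ ≤ (n - k).choose (k - (x + 1)) * (k * ((n - 2 * k) + (x + 1))) := by
          apply Nat.mul_le_mul_left
          calc (n - 2 * k) * ((k - (x + 1)) + 1) ≤ (n - 2 * k) * k :=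
                Nat.mul_le_mul_left _ (by omega)
            _ = k * (n - 2 * k) := Nat.mul_comm _ _
            _ ≤ k * ((n - 2 * k) + (x + 1)) := Nat.mul_le_mul_left _ (by omega)
      _ = k * ((n - k).choose (k - (x + 1)) * (n - k - (k - (x + 1)))) := by rw [hmj]; ring
      _ = k * ((n - k).choose ((k - (x + 1)) + 1) * ((k - (x + 1)) + 1)) := by rw [hid]
      _ = k * (n - k).choose ((k - (x + 1)) + 1) * ((k - (x + 1)) + 1) := by ring
  exact Nat.le_of_mul_le_mul_right h1 (Nat.succ_pos _)

private lemma crossing (k : ℕ) (p b : ℕ → ℝ)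
    (hup : ∀ x, x < k → p x ≤ b x → p (x + 1) ≤ b (x + 1)) :
    ∃ m, (∀ x, x < m → b x ≤ p x) ∧ (∀ x, m ≤ x → x ≤ k → p x ≤ b x) := by
  classical
  have hQ : ∃ x, k < x ∨ p x ≤ b x := ⟨k + 1, Or.inl (Nat.lt_succ_self k)⟩
  refine ⟨Nat.find hQ, ?_, fun x hmx => ?_⟩
  · intro x hx
    have h := Nat.find_min hQ hx
    push_neg at h
    exact h.2.le
  · induction x, hmx using Nat.le_induction with
    | base =>
        intro hmk
        rcases Nat.find_spec hQ with h | h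
        · omega
        · exact h
    | succ x hx ih =>
        intro h
        exact hup x (by omega) (ih (by omega))

private lemma tails_of_crossing (k : ℕ) (p b : ℕ → ℝ)
    (hsum : ∑ x ∈ range (k + 1), p x = ∑ x ∈ range (k + 1), b x)
    (m : ℕ) (h1 : ∀ x, x < m → b x ≤ p x) (h2 : ∀ x, m ≤ x → x ≤ k → p x ≤ b x)
    (t : ℕ) :
    ∑ x ∈ (range (k + 1)).filter (fun x => t ≤ x), p x ≤
      ∑ x ∈ (range (k + 1)).filter (fun x => t ≤ x), b x := by
  rcases le_or_gt t m with htm | htm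
  · have hp := Finset.sum_filter_add_sum_filter_not (range (k + 1)) (fun x => t ≤ x) p
    have hb := Finset.sum_filter_add_sum_filter_not (range (k + 1)) (fun x => t ≤ x) b
    have hh : ∑ x ∈ (range (k + 1)).filter (fun x => ¬ t ≤ x), b x ≤
        ∑ x ∈ (range (k + 1)).filter (fun x => ¬ t ≤ x), p x := by
      apply Finset.sum_le_sum
      intro x hx
      simp only [mem_filter, mem_range] at hx
      exact h1 x (by omega)
    linarith
  · apply Finset.sum_le_sum
    intro x hx
    simp only [mem_filter, mem_range] at hx
    exact h2 x (by omega) (by omega)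

private lemma abel_sum (k : ℕ) (p b : ℕ → ℝ)
    (hsum : ∑ x ∈ range (k + 1), p x = ∑ x ∈ range (k + 1), b x)
    (htail : ∀ t : ℕ, ∑ x ∈ (range (k + 1)).filter (fun x => t ≤ x), p x ≤
        ∑ x ∈ (range (k + 1)).filter (fun x => t ≤ x), b x)
    (f : ℕ → ℝ) (hf : Monotone f) :
    ∑ x ∈ range (k + 1), p x * f x ≤ ∑ x ∈ range (k + 1), b x * f x := by
  have key : ∀ w : ℕ → ℝ, ∑ x ∈ range (k + 1), w x * f x =
      f 0 * ∑ x ∈ range (k + 1), w x +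
      ∑ t ∈ range k, (f (t + 1) - f t) *
        ∑ x ∈ (range (k + 1)).filter (fun x => t + 1 ≤ x), w x := by
    intro w
    have hfx : ∀ x, f x = f 0 + ∑ t ∈ range x, (f (t + 1) - f t) := by
      intro x; rw [Finset.sum_range_sub]; ring
    calc ∑ x ∈ range (k + 1), w x * f x
        = ∑ x ∈ range (k + 1), (w x * f 0 +
            ∑ t ∈ range k, (if t < x then w x * (f (t + 1) - f t) else 0)) := by
          apply Finset.sum_congr rfl
          intro x hx
          simp only [mem_range] at hx
          have hr : (range k).filter (fun t => t < x) = range x := by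
            ext t; simp only [mem_filter, mem_range]; omega
          rw [hfx x, ← Finset.sum_filter, hr, mul_add, Finset.mul_sum]
      _ = f 0 * ∑ x ∈ range (k + 1), w x +
          ∑ x ∈ range (k + 1), ∑ t ∈ range k,
            (if t < x then w x * (f (t + 1) - f t) else 0) := by
          rw [Finset.sum_add_distrib, ← Finset.sum_mul, mul_comm]
      _ = _ := by
          rw [Finset.sum_comm]
          congr 1
          apply Finset.sum_congr rfl
          intro t ht
          rw [← Finset.sum_filter]
          have hfe : (range (k + 1)).filter (fun x => t < x) =
              (range (k + 1)).filter (fun x => t + 1 ≤ x) := by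
            apply Finset.filter_congr
            intro x hx
            constructor <;> (intro h; omega)
          rw [hfe, Finset.mul_sum]
          apply Finset.sum_congr rfl
          intro x hx
          ring
  rw [key p, key b, hsum]
  apply add_le_add_right
  apply Finset.sum_le_sum
  intro t ht
  exact mul_le_mul_of_nonneg_left (htail (t + 1)) (sub_nonneg.2 (hf (Nat.le_succ t)))

private lemma hyp_sum (n k : ℕ) (hkn : k ≤ n) :
    ∑ x ∈ range (k + 1), hypPMF n k x = 1 := by
  have hN : (0 : ℝ) < (n.choose k : ℝ) := by exact_mod_cast Nat.choose_pos hkn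
  have hvdm : ∑ x ∈ range (k + 1), k.choose x * (n - k).choose (k - x) = n.choose k := by
    have h := Nat.add_choose_eq k (n - k) k
    rw [Finset.Nat.sum_antidiagonal_eq_sum_range_succ_mk] at h
    rw [← h]
    congr 1
    omega
  unfold hypPMF
  rw [← Finset.sum_div, ← Nat.cast_sum, hvdm, div_self (ne_of_gt hN)]

private lemma bin_sum (n k : ℕ) :
    ∑ y ∈ range (k + 1), binPMF n k y = 1 := by
  have h := add_pow ((k : ℝ) / ((n : ℝ) - (k : ℝ))) (1 - (k : ℝ) / ((n : ℝ) - (k : ℝ))) k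
  have h1 : ((k : ℝ) / ((n : ℝ) - (k : ℝ)) + (1 - (k : ℝ) / ((n : ℝ) - (k : ℝ)))) = 1 := by ring
  rw [h1, one_pow] at h
  rw [h]
  apply Finset.sum_congr rfl
  intro y hy
  unfold binPMF
  ring

private lemma hyp_pos (n k x : ℕ) (hnk : 2 * k ≤ n) (hx : x ≤ k) :
    0 < hypPMF n k x := by
  have hN : (0 : ℝ) < (n.choose k : ℝ) := by
    exact_mod_cast Nat.choose_pos (by omega : k ≤ n)
  have hnum : 0 < k.choose x * (n - k).choose (k - x) :=
    Nat.mul_pos (Nat.choose_pos hx) (Nat.choose_pos (by omega))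
  exact div_pos (by exact_mod_cast hnum) hN

private lemma q_mem (n k : ℕ) (hnk : 2 * k ≤ n) :
    0 ≤ (k : ℝ) / ((n : ℝ) - (k : ℝ)) ∧ (k : ℝ) / ((n : ℝ) - (k : ℝ)) ≤ 1 := by
  have hkn : (k : ℝ) ≤ (n : ℝ) := by exact_mod_cast (by omega : k ≤ n)
  constructor
  · exact div_nonneg (Nat.cast_nonneg k) (by linarith)
  · rcases Nat.eq_zero_or_pos k with hk | hk
    · subst hk; simp
    · have h2 : (2 * k : ℝ) ≤ (n : ℝ) := by exact_mod_cast hnk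
      have hkpos : (0 : ℝ) < (k : ℝ) := by exact_mod_cast hk
      have hpos : (0 : ℝ) < (n : ℝ) - (k : ℝ) := by linarith
      rw [div_le_one hpos]
      linarith

private lemma bin_nonneg (n k y : ℕ) (hnk : 2 * k ≤ n) : 0 ≤ binPMF n k y := by
  obtain ⟨h0, h1⟩ := q_mem n k hnk
  unfold binPMF
  apply mul_nonneg (mul_nonneg (Nat.cast_nonneg _) (pow_nonneg h0 _))
  exact pow_nonneg (by linarith) _

private lemma mlr_real (n k x : ℕ) (hnk : 2 * k ≤ n) (hx : x < k) :
    hypPMF n k (x + 1) * binPMF n k x ≤ hypPMF n k x * binPMF n k (x + 1) := by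
  obtain ⟨hq0, hq1⟩ := q_mem n k hnk
  set q : ℝ := (k : ℝ) / ((n : ℝ) - (k : ℝ)) with hqdef
  have hkpos : (0 : ℝ) < (k : ℝ) := by exact_mod_cast (by omega : 0 < k)
  have h2 : (2 * k : ℝ) ≤ (n : ℝ) := by exact_mod_cast hnk
  have hpos : (0 : ℝ) < (n : ℝ) - (k : ℝ) := by linarith
  have hnat := mlr_nat n k x hnk hx
  have hcast : ((n : ℝ) - 2 * k) * ((n - k).choose (k - (x + 1)) : ℝ) ≤
      (k : ℝ) * ((n - k).choose (k - x) : ℝ) := by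
    have h := (Nat.cast_le (α := ℝ)).mpr hnat
    push_cast [Nat.cast_sub hnk] at h
    exact h
  have hnq : ((n : ℝ) - (k : ℝ)) * q = k := by
    rw [hqdef]; field_simp
  have hnr : ((n : ℝ) - (k : ℝ)) * (1 - q) = (n : ℝ) - 2 * k := by
    rw [hqdef]; field_simp; ring
  have hcore : ((n - k).choose (k - (x + 1)) : ℝ) * (1 - q) ≤
      ((n - k).choose (k - x) : ℝ) * q := by
    rw [← mul_le_mul_iff_left₀ hpos]
    have e1 : ((n - k).choose (k - (x + 1)) : ℝ) * (1 - q) * ((n : ℝ) - (k : ℝ)) =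
        ((n : ℝ) - 2 * k) * ((n - k).choose (k - (x + 1)) : ℝ) := by
      calc ((n - k).choose (k - (x + 1)) : ℝ) * (1 - q) * ((n : ℝ) - (k : ℝ))
          = ((n - k).choose (k - (x + 1)) : ℝ) * (((n : ℝ) - (k : ℝ)) * (1 - q)) := by ring
        _ = _ := by rw [hnr]; ring
    have e2 : ((n - k).choose (k - x) : ℝ) * q * ((n : ℝ) - (k : ℝ)) =
        (k : ℝ) * ((n - k).choose (k - x) : ℝ) := by
      calc ((n - k).choose (k - x) : ℝ) * q * ((n : ℝ) - (k : ℝ))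
          = ((n - k).choose (k - x) : ℝ) * (((n : ℝ) - (k : ℝ)) * q) := by ring
        _ = _ := by rw [hnq]; ring
    linarith
  have hN : (0 : ℝ) < (n.choose k : ℝ) := by
    exact_mod_cast Nat.choose_pos (by omega : k ≤ n)
  have he : k - x = (k - (x + 1)) + 1 := by omega
  unfold hypPMF
  unfold binPMF
  push_cast
  have hps : (1 - q) ^ (k - x) = (1 - q) ^ (k - (x + 1)) * (1 - q) := by
    rw [he, pow_succ]
  rw [← hqdef, hps, pow_succ q x]
  have hc : 0 ≤ (k.choose (x + 1) : ℝ) * (k.choose x : ℝ) * q ^ x *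
      (1 - q) ^ (k - (x + 1)) / (n.choose k : ℝ) := by
    apply div_nonneg _ (le_of_lt hN)
    apply mul_nonneg (mul_nonneg (mul_nonneg (Nat.cast_nonneg _) (Nat.cast_nonneg _))
      (pow_nonneg hq0 _)) (pow_nonneg (by linarith) _)
  calc (k.choose (x + 1) : ℝ) * ((n - k).choose (k - (x + 1)) : ℝ) / (n.choose k : ℝ) *
        ((k.choose x : ℝ) * q ^ x * ((1 - q) ^ (k - (x + 1)) * (1 - q)))
      = ((k.choose (x + 1) : ℝ) * (k.choose x : ℝ) * q ^ x *
          (1 - q) ^ (k - (x + 1)) / (n.choose k : ℝ)) *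
        (((n - k).choose (k - (x + 1)) : ℝ) * (1 - q)) := by ring
    _ ≤ ((k.choose (x + 1) : ℝ) * (k.choose x : ℝ) * q ^ x *
          (1 - q) ^ (k - (x + 1)) / (n.choose k : ℝ)) *
        (((n - k).choose (k - x) : ℝ) * q) := mul_le_mul_of_nonneg_left hcore hc
    _ = (k.choose x : ℝ) * ((n - k).choose (k - x) : ℝ) / (n.choose k : ℝ) *
        ((k.choose (x + 1) : ℝ) * (q ^ x * q) * (1 - q) ^ (k - (x + 1))) := by ring

private lemma tail_dom (n k : ℕ) (hnk : 2 * k ≤ n) (t : ℕ) :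
    ∑ x ∈ (range (k + 1)).filter (fun x => t ≤ x), hypPMF n k x ≤
      ∑ x ∈ (range (k + 1)).filter (fun x => t ≤ x), binPMF n k x := by
  have hsum : ∑ x ∈ range (k + 1), hypPMF n k x = ∑ x ∈ range (k + 1), binPMF n k x := by
    rw [hyp_sum n k (by omega), bin_sum]
  have hup : ∀ x, x < k → hypPMF n k x ≤ binPMF n k x →
      hypPMF n k (x + 1) ≤ binPMF n k (x + 1) := by
    intro x hx hle
    have hmlr := mlr_real n k x hnk hx
    have hbx : 0 < binPMF n k x := lt_of_lt_of_le (hyp_pos n k x hnk (by omega)) hle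
    have h2 : hypPMF n k x * binPMF n k (x + 1) ≤ binPMF n k x * binPMF n k (x + 1) :=
      mul_le_mul_of_nonneg_right hle (bin_nonneg n k (x + 1) hnk)
    have h3 : hypPMF n k (x + 1) * binPMF n k x ≤ binPMF n k (x + 1) * binPMF n k x := by
      rw [mul_comm (binPMF n k (x + 1))]; linarith
    exact le_of_mul_le_mul_right h3 hbx
  obtain ⟨m, h1, h2⟩ := crossing k (hypPMF n k) (binPMF n k) hup
  exact tails_of_crossing k _ _ hsum m h1 h2 t

/-- Stochastic dominance of `X ∼ Hypergeometric(n, k, k)` by `Y ∼ Binomial(k, k/(n-k))`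
when `n ≥ 2k`: (i) tail dominance `P(X ≥ t) ≤ P(Y ≥ t)` for every `t`;
(ii) `E[f(X)] ≤ E[f(Y)]` for every nondecreasing `f`;
(iii) in particular the MGF bound `E[e^{sX}] ≤ (1 + (k/(n-k))(e^s - 1))^k` for `s ≥ 0`. -/
theorem stmt_16 (n k : ℕ) (hnk : 2 * k ≤ n) :
    (∀ t : ℕ,
      ∑ x ∈ (Finset.range (k + 1)).filter (fun x => t ≤ x),
          ((k.choose x * (n - k).choose (k - x) : ℕ) : ℝ) / (n.choose k) ≤
      ∑ y ∈ (Finset.range (k + 1)).filter (fun y => t ≤ y),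
          (k.choose y : ℝ) * ((k : ℝ) / (n - k)) ^ y *
            (1 - (k : ℝ) / (n - k)) ^ (k - y)) ∧
    (∀ f : ℕ → ℝ, Monotone f →
      ∑ x ∈ Finset.range (k + 1),
          (((k.choose x * (n - k).choose (k - x) : ℕ) : ℝ) / (n.choose k)) * f x ≤
      ∑ y ∈ Finset.range (k + 1),
          ((k.choose y : ℝ) * ((k : ℝ) / (n - k)) ^ y *
            (1 - (k : ℝ) / (n - k)) ^ (k - y)) * f y) ∧
    (∀ s : ℝ, 0 ≤ s →
      ∑ x ∈ Finset.range (k + 1),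
          (((k.choose x * (n - k).choose (k - x) : ℕ) : ℝ) / (n.choose k)) *
            Real.exp (s * x) ≤
      (1 + (k : ℝ) / (n - k) * (Real.exp s - 1)) ^ k) := by
  have hsum : ∑ x ∈ range (k + 1), hypPMF n k x = ∑ x ∈ range (k + 1), binPMF n k x := by
    rw [hyp_sum n k (by omega), bin_sum]
  have habel : ∀ f : ℕ → ℝ, Monotone f →
      ∑ x ∈ range (k + 1), hypPMF n k x * f x ≤
        ∑ y ∈ range (k + 1), binPMF n k y * f y :=
    fun f hf => abel_sum k _ _ hsum (tail_dom n k hnk) f hf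
  refine ⟨tail_dom n k hnk, habel, ?_⟩
  intro s hs
  have hf : Monotone (fun x : ℕ => Real.exp (s * x)) := by
    intro a b hab
    exact Real.exp_le_exp.2 (mul_le_mul_of_nonneg_left (Nat.cast_le.2 hab) hs)
  have h := habel _ hf
  have hrhs : ∑ y ∈ range (k + 1), binPMF n k y * Real.exp (s * y) =
      (1 + (k : ℝ) / ((n : ℝ) - (k : ℝ)) * (Real.exp s - 1)) ^ k := by
    have hpow := add_pow ((k : ℝ) / ((n : ℝ) - (k : ℝ)) * Real.exp s)
      (1 - (k : ℝ) / ((n : ℝ) - (k : ℝ))) k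
    have h1 : (k : ℝ) / ((n : ℝ) - (k : ℝ)) * Real.exp s +
        (1 - (k : ℝ) / ((n : ℝ) - (k : ℝ))) =
        1 + (k : ℝ) / ((n : ℝ) - (k : ℝ)) * (Real.exp s - 1) := by ring
    rw [h1] at hpow
    rw [hpow]
    apply Finset.sum_congr rfl
    intro y hy
    unfold binPMF
    rw [mul_comm s (y : ℝ), Real.exp_nat_mul, mul_pow]
    ring
  rw [← hrhs]
  exact h
end

section
/- In the hypergraphic planted clique detection problem with $\kappa = N^{\beta}$, $0 < \beta < 1/2$: for any polynomial $f$ of the hyperedge indicators of degree at most $D \leq C\log N$ satisfying $\mathbb{E}_{H_0}f(G) = 0$ and $\mathbb{E}_{H_0}f^2(G) = 1$, one has $\mathbb{E}_{H_1}f(G) = O(1)$. Equivalently, $\sum_{\alpha: 0 < |\alpha| \leq D} (\kappa/N)^{2|V(\alpha)|} = O(1)$, where the sum ranges over nonempty sets $\alpha$ of hyperedges and $V(\alpha)$ is the set of vertices appearing in $\alpha$. -/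
set_option maxHeartbeats 1000000

open Finset in
lemma aux_sub {N d : ℕ} (α : Finset {s : Finset (Fin N) // s.card = d}) :
    α.card ≤ ((α.biUnion fun s => s.1).card).choose d := by
  rw [← Finset.card_powersetCard d (α.biUnion fun s => s.1)]
  apply Finset.card_le_card_of_injOn (fun s => s.1)
  · intro s hs
    rw [Finset.mem_coe, Finset.mem_powersetCard]
    exact ⟨Finset.subset_biUnion_of_mem (fun s => s.1) hs, s.2⟩
  · intro a _ b _ h
    exact Subtype.ext h

open Finset in
lemma aux_card (N d k m : ℕ) :
    ((Finset.univ : Finset (Finset {s : Finset (Fin N) // s.card = d})).filter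
      (fun α => (α.biUnion fun s => s.1).card = k ∧ α.card = m)).card
    ≤ N.choose k * (k.choose d).choose m := by
  classical
  set F := ((Finset.univ : Finset (Finset {s : Finset (Fin N) // s.card = d})).filter
      (fun α => (α.biUnion fun s => s.1).card = k ∧ α.card = m)) with hF
  have hmaps : ∀ α ∈ F, (α.biUnion fun s => s.1) ∈ (Finset.univ : Finset (Fin N)).powersetCard k := by
    intro α hα
    rw [Finset.mem_powersetCard]
    exact ⟨Finset.subset_univ _, (Finset.mem_filter.1 hα).2.1⟩
  rw [Finset.card_eq_sum_card_fiberwise hmaps]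
  have hbound : ∀ S ∈ (Finset.univ : Finset (Fin N)).powersetCard k,
      (F.filter (fun α => (α.biUnion fun s => s.1) = S)).card ≤ (k.choose d).choose m := by
    intro S hS
    have hScard : S.card = k := (Finset.mem_powersetCard.1 hS).2
    have h1 : (F.filter (fun α => (α.biUnion fun s => s.1) = S)) ⊆
        ((Finset.univ.filter (fun s : {s : Finset (Fin N) // s.card = d} => s.1 ⊆ S)).powersetCard m) := by
      intro α hα
      obtain ⟨hαF, hαS⟩ := Finset.mem_filter.1 hα
      rw [Finset.mem_powersetCard]
      constructor
      · intro s hs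
        rw [Finset.mem_filter]
        exact ⟨Finset.mem_univ _, hαS ▸ Finset.subset_biUnion_of_mem (fun s => s.1) hs⟩
      · exact (Finset.mem_filter.1 hαF).2.2
    refine (Finset.card_le_card h1).trans ?_
    rw [Finset.card_powersetCard]
    apply Nat.choose_le_choose
    rw [← hScard, ← Finset.card_powersetCard d S]
    apply Finset.card_le_card_of_injOn (fun s => s.1)
    · intro s hs
      rw [Finset.mem_coe, Finset.mem_powersetCard]
      exact ⟨(Finset.mem_filter.1 hs).2, s.2⟩
    · intro a _ b _ h
      exact Subtype.ext h
  calc ∑ S ∈ (Finset.univ : Finset (Fin N)).powersetCard k,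
        (F.filter (fun α => (α.biUnion fun s => s.1) = S)).card
      ≤ ∑ S ∈ (Finset.univ : Finset (Fin N)).powersetCard k, (k.choose d).choose m :=
        Finset.sum_le_sum hbound
    _ = N.choose k * (k.choose d).choose m := by
        rw [Finset.sum_const, Finset.card_powersetCard, Finset.card_univ, Fintype.card_fin,
          smul_eq_mul]

open Real in
lemma aux_key (d : ℕ) (hd : 2 ≤ d) (ε C : ℝ) (hε : 0 < ε) (hC : 0 < C) :
    ∃ L₀ : ℝ, 1 ≤ L₀ ∧ ∀ (L : ℝ) (k m : ℕ), L₀ ≤ L →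
      d ≤ k → 1 ≤ m → m ≤ k ^ d → (m : ℝ) ≤ C * L → k ≤ d * m →
      (d : ℝ) * m * Real.log k ≤ ε * k * L := by
  have hd0 : (0:ℝ) < d := by positivity
  have hd1 : (1:ℝ) ≤ d := by exact_mod_cast le_trans (by norm_num) hd
  set M : ℝ := max 1 (2 * (d:ℝ)^3 * C / ε) with hM
  have hM1 : 1 ≤ M := le_max_left _ _
  have hM0 : 0 < M := lt_of_lt_of_le one_pos hM1
  refine ⟨max 1 (M ^ (2*d) / C), le_max_left _ _, ?_⟩
  intro L k m hL hdk hm1 hmk hmCL hkdm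
  have hL1 : (1:ℝ) ≤ L := le_trans (le_max_left _ _) hL
  have hL0 : (0:ℝ) < L := lt_of_lt_of_le one_pos hL1
  have hCL0 : (0:ℝ) < C * L := by positivity
  have hMCL : M ^ (2*d) ≤ C * L := by
    have := le_trans (le_max_right 1 (M ^ (2*d) / C)) hL
    calc M ^ (2*d) = M ^ (2*d) / C * C := by field_simp
    _ ≤ L * C := by exact mul_le_mul_of_nonneg_right this hC.le
    _ = C * L := mul_comm _ _
  have hk2 : (2:ℝ) ≤ (k:ℝ) := by exact_mod_cast le_trans hd hdk
  have hk0 : (0:ℝ) < k := by linarith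
  have hm0 : (0:ℝ) < m := by exact_mod_cast hm1
  -- k ≤ d * (C*L)
  have hkX : (k:ℝ) ≤ (d:ℝ) * (C * L) := by
    have h1 : (k:ℝ) ≤ (d:ℝ) * m := by exact_mod_cast hkdm
    calc (k:ℝ) ≤ (d:ℝ) * m := h1
    _ ≤ (d:ℝ) * (C * L) := by nlinarith
  set X : ℝ := (d:ℝ) * (C * L) with hX
  have hX0 : (0:ℝ) < X := by positivity
  have hlogk : Real.log k ≤ Real.log X := Real.log_le_log hk0 hkX
  have hlogk0 : 0 ≤ Real.log k := Real.log_nonneg (by linarith)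
  -- m^{1/d} ≤ k
  have hm1d : (m:ℝ) ^ ((1:ℝ)/d) ≤ (k:ℝ) := by
    have h1 : (m:ℝ) ≤ (k:ℝ) ^ (d:ℝ) := by
      rw [Real.rpow_natCast]; exact_mod_cast hmk
    calc (m:ℝ) ^ ((1:ℝ)/d) ≤ ((k:ℝ) ^ (d:ℝ)) ^ ((1:ℝ)/d) :=
          Real.rpow_le_rpow hm0.le h1 (by positivity)
    _ = (k:ℝ) := by
        rw [← Real.rpow_mul (by positivity), mul_one_div, div_self (ne_of_gt hd0),
          Real.rpow_one]
  -- split m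
  have hsplit : (m:ℝ) = (m:ℝ) ^ (1 - (1:ℝ)/d) * (m:ℝ) ^ ((1:ℝ)/d) := by
    rw [← Real.rpow_add hm0]
    norm_num
  have h1d1 : (1:ℝ)/d ≤ 1 := by
    rw [div_le_one hd0]; exact hd1
  have hmfrac : (m:ℝ) ^ (1 - (1:ℝ)/d) ≤ (C*L) ^ (1 - (1:ℝ)/d) :=
    Real.rpow_le_rpow hm0.le hmCL (by linarith)
  -- log X ≤ 2d * X^{1/(2d)}
  have hlogX : Real.log X ≤ 2 * (d:ℝ) * X ^ ((1:ℝ)/(2*d)) := by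
    have h1 : Real.log (X ^ ((1:ℝ)/(2*d))) = ((1:ℝ)/(2*d)) * Real.log X :=
      Real.log_rpow hX0 _
    have h2 : Real.log (X ^ ((1:ℝ)/(2*d))) ≤ X ^ ((1:ℝ)/(2*d)) := by
      have := Real.log_le_sub_one_of_pos (Real.rpow_pos_of_pos hX0 ((1:ℝ)/(2*d)))
      linarith
    have h3 : Real.log X = 2 * (d:ℝ) * Real.log (X ^ ((1:ℝ)/(2*d))) := by
      rw [h1]; field_simp
    rw [h3]
    exact mul_le_mul_of_nonneg_left h2 (by positivity)
  -- X^{1/(2d)} ≤ d * (CL)^{1/(2d)}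
  have hXsplit : X ^ ((1:ℝ)/(2*d)) ≤ (d:ℝ) * (C*L) ^ ((1:ℝ)/(2*d)) := by
    rw [hX, Real.mul_rpow hd0.le hCL0.le]
    gcongr
    calc (d:ℝ) ^ ((1:ℝ)/(2*d)) ≤ (d:ℝ) ^ (1:ℝ) :=
          Real.rpow_le_rpow_of_exponent_le hd1 (by rw [div_le_one (by positivity)]; nlinarith)
    _ = (d:ℝ) := Real.rpow_one _
  -- (CL)^{1/(2d)} ≥ M
  have hCLM : M ≤ (C*L) ^ ((1:ℝ)/(2*d)) := by
    have h1 : (M:ℝ) ^ ((2*d : ℕ):ℝ) ≤ C * L := by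
      rw [Real.rpow_natCast]; exact hMCL
    calc M = (M ^ ((2*d:ℕ):ℝ)) ^ ((1:ℝ)/(2*d)) := by
          rw [← Real.rpow_mul hM0.le]
          push_cast
          rw [mul_one_div, div_self (by positivity), Real.rpow_one]
    _ ≤ (C*L) ^ ((1:ℝ)/(2*d)) := Real.rpow_le_rpow (by positivity) h1 (by positivity)
  -- claim A : d * m^{1-1/d} * log X ≤ ε * L
  have hCLfrac0 : (0:ℝ) < (C*L) ^ ((1:ℝ)/(2*d)) := Real.rpow_pos_of_pos hCL0 _
  have hclaimA : (d:ℝ) * (m:ℝ) ^ (1 - (1:ℝ)/d) * Real.log X ≤ ε * L := by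
    have hmfrac0 : (0:ℝ) ≤ (m:ℝ) ^ (1 - (1:ℝ)/d) := by positivity
    have hlogX' : Real.log X ≤ 2 * (d:ℝ) * ((d:ℝ) * (C*L) ^ ((1:ℝ)/(2*d))) :=
      hlogX.trans (mul_le_mul_of_nonneg_left hXsplit (by positivity))
    have hlogX0 : 0 ≤ Real.log X := le_trans hlogk0 hlogk
    have step1 : (d:ℝ) * (m:ℝ) ^ (1 - (1:ℝ)/d) * Real.log X
        ≤ (d:ℝ) * (C*L) ^ (1 - (1:ℝ)/d) * (2 * (d:ℝ) * ((d:ℝ) * (C*L) ^ ((1:ℝ)/(2*d)))) := by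
      refine mul_le_mul (mul_le_mul_of_nonneg_left hmfrac hd0.le) hlogX' hlogX0 ?_
      positivity
    have step2 : (d:ℝ) * (C*L) ^ (1 - (1:ℝ)/d) * (2 * (d:ℝ) * ((d:ℝ) * (C*L) ^ ((1:ℝ)/(2*d))))
        = 2 * (d:ℝ)^3 * ((C*L) ^ (1 - (1:ℝ)/(2*d))) := by
      have : (C*L) ^ (1 - (1:ℝ)/d) * (C*L) ^ ((1:ℝ)/(2*d)) = (C*L) ^ (1 - (1:ℝ)/(2*d)) := by
        rw [← Real.rpow_add hCL0]
        congr 1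
        field_simp
        ring
      calc (d:ℝ) * (C*L) ^ (1 - (1:ℝ)/d) * (2 * (d:ℝ) * ((d:ℝ) * (C*L) ^ ((1:ℝ)/(2*d))))
          = 2 * (d:ℝ)^3 * ((C*L) ^ (1 - (1:ℝ)/d) * (C*L) ^ ((1:ℝ)/(2*d))) := by ring
        _ = 2 * (d:ℝ)^3 * ((C*L) ^ (1 - (1:ℝ)/(2*d))) := by rw [this]
    have step3 : 2 * (d:ℝ)^3 * ((C*L) ^ (1 - (1:ℝ)/(2*d))) ≤ ε * L := by
      have h1 : (C*L) ^ (1 - (1:ℝ)/(2*d)) = (C*L) / (C*L) ^ ((1:ℝ)/(2*d)) := by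
        rw [eq_div_iff (ne_of_gt hCLfrac0), ← Real.rpow_add hCL0]
        norm_num
      rw [h1]
      have h2 : (C*L) / (C*L) ^ ((1:ℝ)/(2*d)) ≤ (C*L) / M :=
        div_le_div_of_nonneg_left hCL0.le hM0 hCLM
      have h3 : 2 * (d:ℝ)^3 * ((C*L)/M) ≤ ε * L := by
        have hM2 : 2 * (d:ℝ)^3 * C / ε ≤ M := le_max_right _ _
        rw [div_le_iff₀ hε] at hM2
        calc 2 * (d:ℝ)^3 * ((C*L)/M) = (2 * (d:ℝ)^3 * C) * L / M := by ring
        _ ≤ (M * ε) * L / M := by gcongr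
        _ = ε * L := by field_simp
      calc 2 * (d:ℝ)^3 * ((C*L) / (C*L) ^ ((1:ℝ)/(2*d)))
          ≤ 2 * (d:ℝ)^3 * ((C*L)/M) := by gcongr 
        _ ≤ ε * L := h3
    linarith [step1, step2 ▸ step3]
  -- conclude
  calc (d:ℝ) * m * Real.log k
      = ((d:ℝ) * (m:ℝ) ^ (1 - (1:ℝ)/d) * Real.log k) * (m:ℝ) ^ ((1:ℝ)/d) := by
        conv_lhs => rw [hsplit]
        ring
    _ ≤ ((d:ℝ) * (m:ℝ) ^ (1 - (1:ℝ)/d) * Real.log X) * (m:ℝ) ^ ((1:ℝ)/d) := by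
        have : (0:ℝ) ≤ (m:ℝ) ^ ((1:ℝ)/d) := by positivity
        have hmfrac0 : (0:ℝ) ≤ (m:ℝ) ^ (1 - (1:ℝ)/d) := by positivity
        gcongr
    _ ≤ (ε * L) * (m:ℝ) ^ ((1:ℝ)/d) := by
        have : (0:ℝ) ≤ (m:ℝ) ^ ((1:ℝ)/d) := by positivity
        gcongr
    _ ≤ (ε * L) * (k:ℝ) := by
        have : (0:ℝ) ≤ ε * L := by positivity
        gcongr
    _ = ε * k * L := by ring

lemma aux_small (A ε : ℝ) (hA : 0 ≤ A) (hε : 0 < ε) :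
    ∃ L₁ : ℝ, 1 ≤ L₁ ∧ ∀ L : ℝ, L₁ ≤ L → A * L^2 ≤ Real.exp (ε*L) := by
  refine ⟨max 1 (27*A/ε^3), le_max_left _ _, ?_⟩
  intro L hL
  have hL1 : (1:ℝ) ≤ L := le_trans (le_max_left _ _) hL
  have hL0 : (0:ℝ) < L := lt_of_lt_of_le one_pos hL1
  have h1 : (ε*L/3) ≤ Real.exp (ε*L/3) := by
    have := Real.add_one_le_exp (ε*L/3); linarith
  have h2 : (ε*L/3)^3 ≤ Real.exp (ε*L) := by
    calc (ε*L/3)^3 ≤ (Real.exp (ε*L/3))^3 := by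
          apply pow_le_pow_left₀ (by positivity) h1
      _ = Real.exp (ε*L) := by
          rw [← Real.exp_nat_mul]
          congr 1; ring
  have h3 : A * L^2 ≤ (ε*L/3)^3 := by
    have hA27 : 27*A/ε^3 ≤ L := le_trans (le_max_right _ _) hL
    rw [div_le_iff₀ (by positivity)] at hA27
    calc A * L^2 ≤ (L * ε^3/27) * L^2 := by
          apply mul_le_mul_of_nonneg_right _ (by positivity)
          linarith
      _ = (ε*L/3)^2 * (ε*L/3) * (L/L) := by field_simp; ring
      _ = (ε*L/3)^3 := by rw [div_self (ne_of_gt hL0)]; ring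
  linarith
lemma aux_core (d : ℕ) (hd : 2 ≤ d) (β C : ℝ) (hβ0 : 0 < β) (hβ : β < 1/2) (hC : 0 < C) :
    ∃ L₀ : ℝ, 1 ≤ L₀ ∧ ∀ (N k m : ℕ), L₀ ≤ Real.log N →
      d ≤ k → 1 ≤ m → m ≤ k ^ d → (m:ℝ) ≤ C * Real.log N → k ≤ d * m →
      ((N:ℝ) ^ k * (k:ℝ) ^ (d*m)) * ((N:ℝ)^β / N) ^ (2*k) ≤ (N:ℝ) ^ (2*β-1) := by
  have hε : (0:ℝ) < (1-2*β)/2 := by linarith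
  obtain ⟨L₀, hL₀1, hkey⟩ := aux_key d hd ((1-2*β)/2) C hε hC
  refine ⟨L₀, hL₀1, ?_⟩
  intro N k m hL hdk hm1 hmk hmCL hkdm
  set L : ℝ := Real.log N with hLdef
  have hL1 : (1:ℝ) ≤ L := le_trans hL₀1 hL
  have hL0 : (0:ℝ) < L := lt_of_lt_of_le one_pos hL1
  have hN1 : (1:ℝ) < (N:ℝ) := by
    by_contra h
    push_neg at h
    have : L ≤ 0 := Real.log_nonpos (by positivity) h
    linarith
  have hN0 : (0:ℝ) < (N:ℝ) := by linarith
  have hk2 : 2 ≤ k := le_trans hd hdk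
  have hk0 : (0:ℝ) < (k:ℝ) := by exact_mod_cast Nat.lt_of_lt_of_le (by norm_num) hk2
  -- rewrite everything via exp
  have hdiv : (N:ℝ)^β / N = (N:ℝ) ^ (β - 1) := by
    rw [Real.rpow_sub hN0, Real.rpow_one]
  have e1 : ((N:ℝ)^β / N) ^ (2*k) = Real.exp (((β-1) * (2*k)) * L) := by
    rw [hdiv, ← Real.rpow_natCast ((N:ℝ) ^ (β-1)) (2*k), ← Real.rpow_mul hN0.le,
      Real.rpow_def_of_pos hN0]
    push_cast
    rw [hLdef]
    ring_nf
  have e2 : (N:ℝ) ^ k = Real.exp ((k:ℝ) * L) := by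
    rw [← Real.rpow_natCast (N:ℝ) k, Real.rpow_def_of_pos hN0]
    rw [hLdef]
    ring_nf
  have e3 : (k:ℝ) ^ (d*m) = Real.exp (((d:ℝ)*m) * Real.log k) := by
    rw [← Real.rpow_natCast (k:ℝ) (d*m), Real.rpow_def_of_pos hk0]
    push_cast
    ring_nf
  have e4 : (N:ℝ) ^ (2*β-1) = Real.exp ((2*β-1) * L) := by
    rw [Real.rpow_def_of_pos hN0]
    rw [hLdef]
    ring_nf
  rw [e1, e2, e3, e4, ← Real.exp_add, ← Real.exp_add, Real.exp_le_exp]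
  have hkeyN := hkey L k m hL hdk hm1 hmk hmCL hkdm
  have hlast : ((1-2*β)/2) * k * L ≤ (1-2*β) * ((k:ℝ)-1) * L := by
    have hk2' : (2:ℝ) ≤ (k:ℝ) := by exact_mod_cast hk2
    have h1 : (1-2*β) > 0 := by linarith
    have h2 : (1-2*β) * ((k:ℝ)-1) * L - (1-2*β)/2 * k * L = ((1-2*β)*L) * ((k:ℝ)/2 - 1) := by
      ring
    have h3 : (0:ℝ) ≤ ((1-2*β)*L) * ((k:ℝ)/2 - 1) :=
      mul_nonneg (by positivity) (by linarith)
    linarith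
  nlinarith [hkeyN, hlast]
open Classical in
lemma aux_main_s17 (d : ℕ) (hd : 2 ≤ d) (β C : ℝ) (hβ0 : 0 < β) (hβ : β < 1/2) (hC : 0 < C) :
    ∃ N₀ : ℕ, ∀ N : ℕ, N₀ ≤ N →
      ∑ α ∈ (Finset.univ :
            Finset (Finset {s : Finset (Fin N) // s.card = d})).filter
          (fun α => α.Nonempty ∧ (α.card : ℝ) ≤ C * Real.log N),
        ((N : ℝ) ^ β / N) ^ (2 * (α.biUnion fun s => s.1).card) ≤ 1 := by
  obtain ⟨L₀, hL₀1, hcore⟩ := aux_core d hd β C hβ0 hβ hC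
  have hA : (0:ℝ) ≤ ((d:ℝ)*C+1)*(C+1) := by positivity
  have hε : (0:ℝ) < 1-2*β := by linarith
  obtain ⟨L₁, hL₁1, hsmall⟩ := aux_small (((d:ℝ)*C+1)*(C+1)) (1-2*β) hA hε
  refine ⟨⌈Real.exp (max L₀ L₁)⌉₊, ?_⟩
  intro N hN
  have hNreal : Real.exp (max L₀ L₁) ≤ (N:ℝ) := by
    calc Real.exp (max L₀ L₁) ≤ (⌈Real.exp (max L₀ L₁)⌉₊ : ℝ) := Nat.le_ceil _
    _ ≤ (N:ℝ) := by exact_mod_cast hN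
  have hN0 : (0:ℝ) < (N:ℝ) := lt_of_lt_of_le (Real.exp_pos _) hNreal
  set L : ℝ := Real.log N with hLdef
  have hLmax : max L₀ L₁ ≤ L := by
    rw [hLdef, Real.le_log_iff_exp_le hN0]
    exact hNreal
  have hLL₀ : L₀ ≤ L := le_trans (le_max_left _ _) hLmax
  have hLL₁ : L₁ ≤ L := le_trans (le_max_right _ _) hLmax
  have hL1 : (1:ℝ) ≤ L := le_trans hL₀1 hLL₀
  have hL0 : (0:ℝ) < L := lt_of_lt_of_le one_pos hL1
  set D' : ℕ := ⌊C*L⌋₊ with hD'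
  set T := (Finset.univ :
            Finset (Finset {s : Finset (Fin N) // s.card = d})).filter
          (fun α => α.Nonempty ∧ (α.card : ℝ) ≤ C * Real.log N) with hT
  set P := Finset.range (d*D'+1) ×ˢ Finset.range (D'+1) with hP
  set g : Finset {s : Finset (Fin N) // s.card = d} → ℕ × ℕ :=
    fun α => ((α.biUnion fun s => s.1).card, α.card) with hg
  have hkm : ∀ α : Finset {s : Finset (Fin N) // s.card = d},
      (α.biUnion fun s => s.1).card ≤ d * α.card := by
    intro α
    calc (α.biUnion fun s => s.1).card ≤ ∑ s ∈ α, s.1.card := Finset.card_biUnion_le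
    _ = ∑ s ∈ α, d := by
        apply Finset.sum_congr rfl
        intro s _
        exact s.2
    _ = α.card * d := by rw [Finset.sum_const, smul_eq_mul]
    _ = d * α.card := mul_comm _ _
  have hmaps : ∀ α ∈ T, g α ∈ P := by
    intro α hα
    obtain ⟨-, hne, hcard⟩ := Finset.mem_filter.1 hα
    have hm : α.card ≤ D' := Nat.le_floor hcard
    rw [hP, Finset.mem_product, Finset.mem_range, Finset.mem_range]
    constructor
    · exact Nat.lt_succ_of_le (le_trans (hkm α) (Nat.mul_le_mul_left d hm))
    · exact Nat.lt_succ_of_le hm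
  rw [← Finset.sum_fiberwise_of_maps_to hmaps]
  -- bound each fiber
  have hfiber : ∀ p ∈ P,
      ∑ α ∈ T.filter (fun α => g α = p), ((N : ℝ) ^ β / N) ^ (2 * (α.biUnion fun s => s.1).card)
      ≤ (N:ℝ) ^ (2*β-1) := by
    intro p hp
    rcases (T.filter (fun α => g α = p)).eq_empty_or_nonempty with he | ⟨α₀, hα₀⟩
    · rw [he, Finset.sum_empty]
      positivity
    · obtain ⟨hα₀T, hα₀p⟩ := Finset.mem_filter.1 hα₀
      obtain ⟨-, hne, hcard⟩ := Finset.mem_filter.1 hα₀T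
      set k := p.1 with hk
      set m := p.2 with hm
      have hkα : (α₀.biUnion fun s => s.1).card = k := by rw [hk, ← hα₀p]
      have hmα : α₀.card = m := by rw [hm, ← hα₀p]
      -- facts
      have hm1 : 1 ≤ m := hmα ▸ Finset.card_pos.2 hne
      have hdk : d ≤ k := by
        obtain ⟨s, hs⟩ := hne
        calc d = s.1.card := s.2.symm
        _ ≤ (α₀.biUnion fun s => s.1).card :=
            Finset.card_le_card (Finset.subset_biUnion_of_mem (fun s => s.1) hs)
        _ = k := hkα
      have hkdm : k ≤ d * m := by rw [← hkα, ← hmα]; exact hkm α₀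
      have hmkd : m ≤ k ^ d := by
        calc m = α₀.card := hmα.symm
        _ ≤ ((α₀.biUnion fun s => s.1).card).choose d := aux_sub α₀
        _ = k.choose d := by rw [hkα]
        _ ≤ k ^ d := Nat.choose_le_pow _ _
      have hmCL : (m:ℝ) ≤ C * L := by rw [← hmα]; exact hcard
      -- sum over fiber = card * value
      have hval : ∑ α ∈ T.filter (fun α => g α = p),
          ((N : ℝ) ^ β / N) ^ (2 * (α.biUnion fun s => s.1).card)
          = ((T.filter (fun α => g α = p)).card : ℝ) * ((N : ℝ) ^ β / N) ^ (2 * k) := by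
        rw [Finset.sum_congr rfl (fun α hα => ?_), Finset.sum_const, nsmul_eq_mul]
        obtain ⟨-, hαp⟩ := Finset.mem_filter.1 hα
        have : (α.biUnion fun s => s.1).card = k := by rw [hk, ← hαp]
        rw [this]
      rw [hval]
      -- card bound
      have hsubset : T.filter (fun α => g α = p) ⊆
          (Finset.univ : Finset (Finset {s : Finset (Fin N) // s.card = d})).filter
            (fun α => (α.biUnion fun s => s.1).card = k ∧ α.card = m) := by
        intro α hα
        obtain ⟨-, hαp⟩ := Finset.mem_filter.1 hα
        rw [Finset.mem_filter]
        refine ⟨Finset.mem_univ _, ?_, ?_⟩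
        · rw [hk, ← hαp]
        · rw [hm, ← hαp]
      have hcardle : ((T.filter (fun α => g α = p)).card : ℝ) ≤ (N:ℝ)^k * (k:ℝ)^(d*m) := by
        have h1 : (T.filter (fun α => g α = p)).card ≤ N.choose k * (k.choose d).choose m :=
          le_trans (Finset.card_le_card hsubset) (aux_card N d k m)
        have h2 : N.choose k * (k.choose d).choose m ≤ N^k * (k^d)^m :=
          Nat.mul_le_mul (Nat.choose_le_pow _ _)
            (le_trans (Nat.choose_le_pow _ _) (Nat.pow_le_pow_left (Nat.choose_le_pow _ _) m))
        calc ((T.filter (fun α => g α = p)).card : ℝ) ≤ ((N^k * (k^d)^m : ℕ) : ℝ) := by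
              exact_mod_cast le_trans h1 h2
        _ = (N:ℝ)^k * (k:ℝ)^(d*m) := by push_cast [← pow_mul]; ring
      calc ((T.filter (fun α => g α = p)).card : ℝ) * ((N : ℝ) ^ β / N) ^ (2 * k)
          ≤ ((N:ℝ)^k * (k:ℝ)^(d*m)) * ((N : ℝ) ^ β / N) ^ (2 * k) := by
            apply mul_le_mul_of_nonneg_right hcardle
            positivity
        _ ≤ (N:ℝ) ^ (2*β-1) := hcore N k m hLL₀ hdk hm1 hmkd hmCL hkdm
  calc ∑ p ∈ P, ∑ α ∈ T.filter (fun α => g α = p),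
        ((N : ℝ) ^ β / N) ^ (2 * (α.biUnion fun s => s.1).card)
      ≤ ∑ _p ∈ P, (N:ℝ) ^ (2*β-1) := Finset.sum_le_sum hfiber
    _ = (P.card : ℝ) * (N:ℝ) ^ (2*β-1) := by rw [Finset.sum_const, nsmul_eq_mul]
    _ ≤ 1 := by
        have hPcard : (P.card : ℝ) ≤ ((d:ℝ)*C+1)*(C+1) * L^2 := by
          rw [hP, Finset.card_product, Finset.card_range, Finset.card_range]
          have hD'le : (D' : ℝ) ≤ C * L := Nat.floor_le (by positivity)
          push_cast
          have h1 : ((d:ℕ):ℝ) * D' + 1 ≤ ((d:ℝ)*C+1) * L := by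
            calc (d:ℝ) * D' + 1 ≤ (d:ℝ) * (C*L) + 1 := by
                  have : (0:ℝ) ≤ d := by positivity
                  nlinarith
            _ ≤ ((d:ℝ)*C+1) * L := by nlinarith
          have h2 : (D':ℝ) + 1 ≤ (C+1) * L := by nlinarith
          calc ((d:ℝ) * D' + 1) * ((D':ℝ) + 1) ≤ ((d:ℝ)*C+1) * L * ((C+1) * L) := by
                apply mul_le_mul h1 h2 (by positivity) (by positivity)
          _ = ((d:ℝ)*C+1)*(C+1) * L^2 := by ring
        have hrpow : (N:ℝ) ^ (2*β-1) = Real.exp (-((1-2*β) * L)) := by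
          rw [Real.rpow_def_of_pos hN0]
          rw [hLdef]
          ring_nf
        have hsm := hsmall L hLL₁
        rw [hrpow]
        calc (P.card : ℝ) * Real.exp (-((1-2*β) * L))
            ≤ (((d:ℝ)*C+1)*(C+1) * L^2) * Real.exp (-((1-2*β) * L)) := by
              apply mul_le_mul_of_nonneg_right hPcard (by positivity)
          _ ≤ Real.exp ((1-2*β)*L) * Real.exp (-((1-2*β) * L)) := by
              apply mul_le_mul_of_nonneg_right hsm (by positivity)
          _ = 1 := by rw [← Real.exp_add]; ring_nf; exact Real.exp_zero

open Classical in
/-- Failure of low-degree polynomial tests for hypergraphic planted clique with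
`κ = N^β`, `0 < β < 1/2`: for degree `D ≤ C log N`, the squared norm of the degree-`D`
truncated likelihood ratio minus one, namely
`∑_{α : 0 < |α| ≤ D} (κ/N)^{2|V(α)|}` (sum over nonempty sets `α` of hyperedges, with
`V(α)` the set of vertices appearing in `α`), is `O(1)`; equivalently any degree-`D`
polynomial `f` with `E_{H₀} f = 0`, `E_{H₀} f² = 1` has `E_{H₁} f = O(1)`. -/
theorem stmt_17 (d : ℕ) (hd : 2 ≤ d) (β : ℝ) (hβ0 : 0 < β) (hβ : β < 1 / 2)
    (C : ℝ) (hC : 0 < C) :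
    ∃ B : ℝ, ∀ N : ℕ, 1 ≤ N →
      ∑ α ∈ (Finset.univ :
            Finset (Finset {s : Finset (Fin N) // s.card = d})).filter
          (fun α => α.Nonempty ∧ (α.card : ℝ) ≤ C * Real.log N),
        ((N : ℝ) ^ β / N) ^ (2 * (α.biUnion fun s => s.1).card) ≤ B := by
  have hβ' : β < 1/2 := hβ
  obtain ⟨N₀, hN₀⟩ := aux_main_s17 d hd β C hβ0 hβ' hC
  set S : ℕ → ℝ := fun n =>
    ∑ α ∈ (Finset.univ :
          Finset (Finset {s : Finset (Fin n) // s.card = d})).filter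
        (fun α => α.Nonempty ∧ (α.card : ℝ) ≤ C * Real.log n),
      ((n : ℝ) ^ β / n) ^ (2 * (α.biUnion fun s => s.1).card) with hS
  have hSnonneg : ∀ n, 0 ≤ S n := by
    intro n
    apply Finset.sum_nonneg
    intro α _
    positivity
  refine ⟨1 + ∑ n ∈ Finset.range N₀, S n, ?_⟩
  intro N hN1
  have hsum0 : (0:ℝ) ≤ ∑ n ∈ Finset.range N₀, S n :=
    Finset.sum_nonneg fun n _ => hSnonneg n
  rcases lt_or_ge N N₀ with h | h
  · have : S N ≤ ∑ n ∈ Finset.range N₀, S n :=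
      Finset.single_le_sum (fun n _ => hSnonneg n) (Finset.mem_range.2 h)
    calc S N ≤ ∑ n ∈ Finset.range N₀, S n := this
    _ ≤ 1 + ∑ n ∈ Finset.range N₀, S n := by linarith
  · calc S N ≤ 1 := hN₀ N h
    _ ≤ 1 + ∑ n ∈ Finset.range N₀, S n := by linarith
end
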